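/- arXiv:1708.09373 — 15 statements merged into one kernel-verified Lean document; each statement's English description precedes it below -/
import Mathlib

section
/- Let K be a field, N ≥ 2 an integer, and α, β ∈ K. Suppose τ : ℤ → K satisfies τ_n ≠ 0 for all n, and the sequence u_n := τ_{n+3}τ_n/(τ_{n+2}τ_{n+1}) satisfies the generalized DTKQ equation of order N with parameters α, β for all n ∈ ℤ. Then the quantity γ_n := (τ_{n+N+2}τ_n − α·τ_{n+N}τ_{n+2})/(τ_{n+N+1}τ_{n+1}) is 2-periodic, i.e. γ_{n+2} = γ_n for all n ∈ ℤ; equivalently, τ satisfies the bilinear equation τ_{n+N+2}τ_n = γ_n·τ_{n+N+1}τ_{n+1} + α·τ_{n+N}τ_{n+2} with a 2-periodic coefficient γ_n. -/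
theorem dtkq_prod_aux {K : Type*} [Field K] (τ : ℤ → K) (hτ : ∀ n, τ n ≠ 0)
    (u : ℤ → K) (hu : ∀ n : ℤ, u n = τ (n + 3) * τ n / (τ (n + 2) * τ (n + 1)))
    (M : ℕ) (n : ℤ) :
    ∏ k ∈ Finset.range M, u (n + k + 1)
      = τ (n + M + 3) * τ (n + 1) / (τ (n + M + 1) * τ (n + 3)) := by
  have hc : ∀ a b : ℤ, a = b → τ a = τ b := fun a b h => by rw [h]
  induction M with
  | zero =>
      simp only [Finset.range_zero, Finset.prod_empty, Nat.cast_zero]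
      rw [mul_comm (τ (n + 0 + 1)), hc (n + 0 + 3) (n + 3) (by ring),
        hc (n + 0 + 1) (n + 1) (by ring), div_self (mul_ne_zero (hτ _) (hτ _))]
  | succ M ih =>
      rw [Finset.prod_range_succ, ih, hu]
      push_cast
      rw [hc (n + ↑M + 1 + 3) (n + ↑M + 4) (by ring),
        hc (n + ↑M + 1 + 2) (n + ↑M + 3) (by ring),
        hc (n + ↑M + 1 + 1) (n + ↑M + 2) (by ring),
        hc (n + (↑M + 1) + 3) (n + ↑M + 4) (by ring),
        hc (n + (↑M + 1) + 1) (n + ↑M + 2) (by ring),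
        div_mul_div_comm, div_eq_div_iff (by simp [hτ]) (by simp [hτ])]
      ring

/-- the tau substitution into the generalized DTKQ equation of order `N`
yields the bilinear equation with a 2-periodic coefficient `γ`. -/
theorem dtkq_tau_gives_bilinear {K : Type*} [Field K] (N : ℕ) (hN : 2 ≤ N) (α β : K)
    (τ : ℤ → K) (hτ : ∀ n, τ n ≠ 0)
    (u : ℤ → K) (hu : ∀ n : ℤ, u n = τ (n + 3) * τ n / (τ (n + 2) * τ (n + 1)))
    (hDTKQ : ∀ n : ℤ,
      ((∑ j ∈ Finset.range (N + 1), u (n + j)) + β) *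
        (∏ k ∈ Finset.range (N - 1), u (n + k + 1)) = α)
    (γ : ℤ → K)
    (hγ : ∀ n : ℤ, γ n =
      (τ (n + N + 2) * τ n - α * (τ (n + N) * τ (n + 2))) /
        (τ (n + N + 1) * τ (n + 1))) :
    (∀ n : ℤ, γ (n + 2) = γ n) ∧
      (∀ n : ℤ, τ (n + N + 2) * τ n =
        γ n * (τ (n + N + 1) * τ (n + 1)) + α * (τ (n + N) * τ (n + 2))) := by
  constructor
  · intro n
    have hc : ∀ a b : ℤ, a = b → τ a = τ b := fun a b h => by rw [h]
    have hcast : ((N - 1 : ℕ) : ℤ) = (N : ℤ) - 1 := by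
      rw [Nat.cast_sub (by omega)]; rfl
    -- sum shift lemma
    have hS : (∑ j ∈ Finset.range (N + 1), u (n + 1 + j))
        = (∑ j ∈ Finset.range (N + 1), u (n + j)) + u (n + N + 1) - u n := by
      have e1 := Finset.sum_range_succ (fun j : ℕ => u (n + j)) (N + 1)
      have e2 := Finset.sum_range_succ' (fun j : ℕ => u (n + j)) (N + 1)
      rw [e1] at e2
      have e3 : ∀ j ∈ Finset.range (N + 1), u (n + ↑(j + 1)) = u (n + 1 + j) := by
        intro j _; congr 1; push_cast; ring
      rw [Finset.sum_congr rfl e3] at e2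
      push_cast at e2
      have huc : ∀ a b : ℤ, a = b → u a = u b := fun a b h => by rw [h]
      rw [huc (n + (↑N + 1)) (n + ↑N + 1) (by ring), huc (n + 0) n (by ring)] at e2
      linear_combination -e2
    have hd1 := hDTKQ n
    have hd2 := hDTKQ (n + 1)
    rw [dtkq_prod_aux τ hτ u hu] at hd1 hd2
    rw [hS] at hd2
    rw [hu (n + ↑N + 1), hu n] at hd2
    rw [hcast] at hd1 hd2
    rw [hγ (n + 2), hγ n]
    -- canonicalize τ arguments
    rw [hc (n + (↑N - 1) + 3) (n + ↑N + 2) (by ring),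
      hc (n + (↑N - 1) + 1) (n + ↑N) (by ring)] at hd1
    rw [hc (n + 1 + (↑N - 1) + 3) (n + ↑N + 3) (by ring),
      hc (n + 1 + (↑N - 1) + 1) (n + ↑N + 1) (by ring),
      hc (n + 1 + 1) (n + 2) (by ring),
      hc (n + ↑N + 1 + 3) (n + ↑N + 4) (by ring),
      hc (n + ↑N + 1 + 2) (n + ↑N + 3) (by ring),
      hc (n + ↑N + 1 + 1) (n + ↑N + 2) (by ring),
      hc (n + 1 + 3) (n + 4) (by ring)] at hd2
    rw [hc (n + 2 + ↑N + 2) (n + ↑N + 4) (by ring),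
      hc (n + 2 + ↑N) (n + ↑N + 2) (by ring),
      hc (n + 2 + 2) (n + 4) (by ring),
      hc (n + 2 + ↑N + 1) (n + ↑N + 3) (by ring),
      hc (n + 2 + 1) (n + 3) (by ring)]
    set s := ∑ j ∈ Finset.range (N + 1), u (n + j) with hs
    field_simp [hτ] at hd1 hd2 ⊢
    apply mul_left_cancel₀ (mul_ne_zero (hτ (n + ↑N + 3)) (hτ (n + 2)))
    linear_combination (τ (n + ↑N + 3) * τ (n + 2)) * hd2 - (τ (n + ↑N + 3) * τ (n + 2))^2 * hd1
  · intro n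
    rw [hγ n, div_mul_cancel₀ _ (mul_ne_zero (hτ _) (hτ _))]
    ring
end

section
/- Let K be a field, N ≥ 2 an integer, and α ∈ K. Suppose τ : ℤ → K satisfies τ_n ≠ 0 for all n and the bilinear equation τ_{n+N+2}τ_n = γ_n·τ_{n+N+1}τ_{n+1} + α·τ_{n+N}τ_{n+2} for all n ∈ ℤ, where the coefficient γ : ℤ → K is 2-periodic (γ_{n+2} = γ_n for all n). Define u_n := τ_{n+3}τ_n/(τ_{n+2}τ_{n+1}). Then the quantity β_n := α/(u_{n+1}u_{n+2}⋯u_{n+N−1}) − (u_n + u_{n+1} + … + u_{n+N}) is independent of n; consequently u satisfies the generalized DTKQ equation of order N with parameters α and β := β_0. -/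
/-- conversely, the bilinear equation with 2-periodic coefficient `γ` has a
first integral `β` (independent of `n`), such that `u` given by the tau substitution
satisfies the generalized DTKQ equation of order `N` with parameters `α`, `β := B 0`. -/
theorem bilinear_gives_dtkq {K : Type*} [Field K] (N : ℕ) (hN : 2 ≤ N) (α : K)
    (τ : ℤ → K) (hτ : ∀ n, τ n ≠ 0)
    (γ : ℤ → K) (hper : ∀ n : ℤ, γ (n + 2) = γ n)
    (hbil : ∀ n : ℤ, τ (n + N + 2) * τ n =
      γ n * (τ (n + N + 1) * τ (n + 1)) + α * (τ (n + N) * τ (n + 2)))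
    (u : ℤ → K) (hu : ∀ n : ℤ, u n = τ (n + 3) * τ n / (τ (n + 2) * τ (n + 1)))
    (B : ℤ → K)
    (hB : ∀ n : ℤ, B n =
      α / (∏ k ∈ Finset.range (N - 1), u (n + k + 1)) -
        ∑ j ∈ Finset.range (N + 1), u (n + j)) :
    (∀ n : ℤ, B n = B 0) ∧
      (∀ n : ℤ, ((∑ j ∈ Finset.range (N + 1), u (n + j)) + B 0) *
        (∏ k ∈ Finset.range (N - 1), u (n + k + 1)) = α) := by
  have hu0 : ∀ n : ℤ, u n ≠ 0 := fun n => by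
    rw [hu]
    exact div_ne_zero (mul_ne_zero (hτ _) (hτ _)) (mul_ne_zero (hτ _) (hτ _))
  have hc : ((N - 1 : ℕ) : ℤ) = (N : ℤ) - 1 := by
    have h1 : 1 ≤ N := by omega
    push_cast [h1]; ring
  have hprod : ∀ (m : ℕ) (n : ℤ), ∏ k ∈ Finset.range m, u (n + k + 1)
      = τ (n + 1) * τ (n + (m : ℤ) + 3) / (τ (n + 3) * τ (n + (m : ℤ) + 1)) := by
    intro m n
    induction m with
    | zero =>
      rw [Finset.prod_range_zero]
      push_cast
      rw [eq_comm, div_eq_one_iff_eq (mul_ne_zero (hτ _) (hτ _))]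
      ring
    | succ m ih =>
      rw [Finset.prod_range_succ, ih, hu]
      push_cast
      rw [show n + ((m : ℤ) + 1) + 3 = n + (m : ℤ) + 1 + 3 by ring,
          show n + ((m : ℤ) + 1) + 1 = n + (m : ℤ) + 1 + 1 by ring]
      field_simp [hτ]
      ring
  have hSdiff : ∀ n : ℤ, (∑ j ∈ Finset.range (N + 1), u (n + 1 + j))
      = (∑ j ∈ Finset.range (N + 1), u (n + j)) - u n + u (n + N + 1) := by
    intro n
    have h1 : ∑ j ∈ Finset.range N, u (n + 1 + (j : ℤ))
        = ∑ j ∈ Finset.range N, u (n + ((j + 1 : ℕ) : ℤ)) :=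
      Finset.sum_congr rfl fun j _ => by
        rw [show n + 1 + (j : ℤ) = n + ((j + 1 : ℕ) : ℤ) by push_cast; ring]
    rw [Finset.sum_range_succ, Finset.sum_range_succ', h1,
      show n + 1 + (N : ℤ) = n + (N : ℤ) + 1 by ring]
    simp only [Nat.cast_zero, add_zero]
    ring
  have hstep : ∀ n : ℤ, B (n + 1) = B n := by
    intro n
    rw [hB (n + 1), hB n, hprod (N - 1) (n + 1), hprod (N - 1) n, hc, hSdiff n]
    set S := ∑ j ∈ Finset.range (N + 1), u (n + j) with hSdef
    rw [hu n, hu (n + (N : ℤ) + 1)]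
    rw [show n + 1 + ((N : ℤ) - 1) + 3 = n + N + 3 by ring,
        show n + 1 + ((N : ℤ) - 1) + 1 = n + N + 1 by ring,
        show n + ((N : ℤ) - 1) + 3 = n + N + 2 by ring,
        show n + ((N : ℤ) - 1) + 1 = n + N by ring,
        show n + (N : ℤ) + 1 + 3 = n + N + 4 by ring,
        show n + (N : ℤ) + 1 + 2 = n + N + 3 by ring,
        show n + (N : ℤ) + 1 + 1 = n + N + 2 by ring,
        show n + 1 + (1 : ℤ) = n + 2 by ring,
        show n + 1 + (3 : ℤ) = n + 4 by ring]
    have hb1 := hbil n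
    have hb2 := hbil (n + 2)
    rw [hper n,
        show n + 2 + (N : ℤ) + 2 = n + N + 4 by ring,
        show n + 2 + (N : ℤ) + 1 = n + N + 3 by ring,
        show n + 2 + (1 : ℤ) = n + 3 by ring,
        show n + 2 + (N : ℤ) = n + N + 2 by ring,
        show n + 2 + (2 : ℤ) = n + 4 by ring] at hb2
    rw [div_div_eq_mul_div, div_div_eq_mul_div]
    field_simp [hτ]
    linear_combination (τ (n+3) * τ (n+(N:ℤ)+3) * hb1 - τ (n+1) * τ (n+(N:ℤ)+1) * hb2)
  have hconst : ∀ n : ℤ, B n = B 0 := by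
    intro n
    induction n using Int.induction_on with
    | zero => rfl
    | succ k ih => rw [show ((k : ℤ) + 1) = (k : ℤ) + 1 from rfl, hstep k, ih]
    | pred k ih =>
      have h := hstep (-(k : ℤ) - 1)
      rw [show (-(k : ℤ) - 1 + 1) = -(k : ℤ) by ring] at h
      rw [← h]
      exact ih
  refine ⟨hconst, fun n => ?_⟩
  have hPn : (∏ k ∈ Finset.range (N - 1), u (n + k + 1)) ≠ 0 :=
    Finset.prod_ne_zero_iff.mpr fun k _ => hu0 _
  have h := hB n
  rw [hconst n] at h
  rw [h]
  field_simp
  ring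
end

section
/- Let K be a field, N ≥ 2 an EVEN integer, and α, β ∈ K. Suppose τ : ℤ → K satisfies τ_n ≠ 0 for all n, and u_n := τ_{n+3}τ_n/(τ_{n+2}τ_{n+1}) satisfies the generalized DTKQ equation of order N with parameters α, β for all n ∈ ℤ. Then the quantity K_n := (τ_n·τ_{n+2N+1} + α·τ_{n+1}·τ_{n+2N})/(τ_{n+N}·τ_{n+N+1}) is independent of n; equivalently, τ satisfies the bilinear equation τ_{n+2N+1}τ_n = −α·τ_{n+2N}τ_{n+1} + K·τ_{n+N+1}τ_{n+N} for all n, with the constant K := K_0. -/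
/-- for even `N`, the tau function of a solution of the generalized DTKQ
equation satisfies the second bilinear equation
`τ_{n+2N+1} τ_n = -α τ_{n+2N} τ_{n+1} + K τ_{n+N+1} τ_{n+N}` with constant `K`. -/
theorem dtkq_even_second_bilinear {K : Type*} [Field K] (N : ℕ) (hN : 2 ≤ N)
    (hNeven : Even N) (α β : K)
    (τ : ℤ → K) (hτ : ∀ n, τ n ≠ 0)
    (u : ℤ → K) (hu : ∀ n : ℤ, u n = τ (n + 3) * τ n / (τ (n + 2) * τ (n + 1)))
    (hDTKQ : ∀ n : ℤ,
      ((∑ j ∈ Finset.range (N + 1), u (n + j)) + β) *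
        (∏ k ∈ Finset.range (N - 1), u (n + k + 1)) = α)
    (Kf : ℤ → K)
    (hKf : ∀ n : ℤ, Kf n =
      (τ n * τ (n + 2 * N + 1) + α * (τ (n + 1) * τ (n + 2 * N))) /
        (τ (n + N) * τ (n + N + 1))) :
    (∀ n : ℤ, Kf n = Kf 0) ∧
      (∀ n : ℤ, τ (n + 2 * N + 1) * τ n =
        -α * (τ (n + 2 * N) * τ (n + 1)) + Kf 0 * (τ (n + N + 1) * τ (n + N))) := by
  obtain ⟨M, hM⟩ := hNeven
  -- telescoping product formula
  have hprod : ∀ (n : ℤ) (m : ℕ), ∏ k ∈ Finset.range m, u (n + k + 1)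
      = τ (n + m + 3) * τ (n + 1) / (τ (n + 3) * τ (n + m + 1)) := by
    intro n m
    induction m with
    | zero =>
      simp only [Finset.range_zero, Finset.prod_empty, Nat.cast_zero, add_zero]
      rw [div_self (mul_ne_zero (hτ _) (hτ _))]
    | succ m ih =>
      rw [Finset.prod_range_succ, ih, hu]
      push_cast
      ring_nf
      have h1 := hτ (3 + n); have h2 := hτ (1 + n + (m:ℤ)); have h3 := hτ (2 + n + (m:ℤ))
      have h4 := hτ (3 + n + (m:ℤ)); have h5 := hτ (1 + n); have h6 := hτ (4 + n + (m:ℤ))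
      field_simp
  -- shifting the sum
  have hsum : ∀ n : ℤ, ∑ j ∈ Finset.range (N+1), u (n + 1 + (j:ℤ))
      = (∑ j ∈ Finset.range (N+1), u (n + (j:ℤ))) + u (n + (N:ℤ) + 1) - u n := by
    intro n
    have h1 : ∑ j ∈ Finset.range (N+2), u (n + (j:ℤ))
        = (∑ j ∈ Finset.range (N+1), u (n + (j:ℤ))) + u (n + ((N:ℤ)+1)) := by
      have := Finset.sum_range_succ (fun j : ℕ => u (n + (j:ℤ))) (N+1)
      push_cast at this
      exact this
    have h2 : ∑ j ∈ Finset.range (N+2), u (n + (j:ℤ))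
        = (∑ j ∈ Finset.range (N+1), u (n + 1 + (j:ℤ))) + u n := by
      have := Finset.sum_range_succ' (fun j : ℕ => u (n + (j:ℤ))) (N+1)
      push_cast at this
      rw [this]
      congr 1
      · exact Finset.sum_congr rfl (fun j _ => by ring_nf)
      · norm_num
    have h3 : (∑ j ∈ Finset.range (N+1), u (n + 1 + (j:ℤ))) + u n
        = (∑ j ∈ Finset.range (N+1), u (n + (j:ℤ))) + u (n + ((N:ℤ)+1)) := by rw [← h2, h1]
    have e : n + ((N:ℤ)+1) = n + (N:ℤ) + 1 := by ring
    rw [e] at h3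
    linear_combination h3
  -- the key polynomial identity : two-periodicity of J
  have hJstep : ∀ n : ℤ,
      (τ (n+2) * τ (n+(N:ℤ)+4) - α * (τ (n+4) * τ (n+(N:ℤ)+2))) * (τ (n+1) * τ (n+(N:ℤ)+1))
      = (τ n * τ (n+(N:ℤ)+2) - α * (τ (n+2) * τ (n+(N:ℤ)))) * (τ (n+3) * τ (n+(N:ℤ)+3)) := by
    intro n
    have hc : ((N-1:ℕ):ℤ) = (N:ℤ) - 1 := by
      have h1 : 1 ≤ N := le_trans one_le_two hN
      push_cast [h1]; ring
    have e1 := hDTKQ n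
    have e2 := hDTKQ (n+1)
    rw [hprod n (N-1), hc] at e1
    rw [hprod (n+1) (N-1), hc, hsum n] at e2
    rw [show n + ((N:ℤ)-1) + 3 = n + N + 2 from by ring,
        show n + ((N:ℤ)-1) + 1 = n + N from by ring] at e1
    rw [show n + 1 + ((N:ℤ)-1) + 3 = n + N + 3 from by ring,
        show n + 1 + ((N:ℤ)-1) + 1 = n + N + 1 from by ring,
        show n + 1 + 1 = n + 2 from by ring,
        show n + 1 + 3 = n + 4 from by ring,
        hu (n + (N:ℤ) + 1), hu n,
        show n + (N:ℤ) + 1 + 3 = n + N + 4 from by ring,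
        show n + (N:ℤ) + 1 + 2 = n + N + 3 from by ring,
        show n + (N:ℤ) + 1 + 1 = n + N + 2 from by ring] at e2
    set S := ∑ j ∈ Finset.range (N+1), u (n + (j:ℤ)) with hS
    have t0 := hτ n; have t1 := hτ (n+1); have t2 := hτ (n+2); have t3 := hτ (n+3)
    have t4 := hτ (n+4); have tN := hτ (n+(N:ℤ)); have tN1 := hτ (n+(N:ℤ)+1)
    have tN2 := hτ (n+(N:ℤ)+2); have tN3 := hτ (n+(N:ℤ)+3); have tN4 := hτ (n+(N:ℤ)+4)
    have hW : S + β = α * (τ (n+3) * τ (n+(N:ℤ))) / (τ (n+(N:ℤ)+2) * τ (n+1)) := by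
      rw [eq_div_iff (mul_ne_zero tN2 t1)]
      field_simp at e1
      linear_combination e1
    have e2' : ((S + β) + τ (n+(N:ℤ)+4) * τ (n+(N:ℤ)+1) / (τ (n+(N:ℤ)+3) * τ (n+(N:ℤ)+2))
        - τ (n+3) * τ n / (τ (n+2) * τ (n+1)))
        * (τ (n+(N:ℤ)+3) * τ (n+2) / (τ (n+4) * τ (n+(N:ℤ)+1))) = α := by
      linear_combination e2
    rw [hW] at e2'
    field_simp at e2'
    have hcnz : τ (n+1) * τ (n+2) * τ (n+(N:ℤ)+2) * τ (n+(N:ℤ)+3) ≠ 0 :=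
      mul_ne_zero (mul_ne_zero (mul_ne_zero t1 t2) tN2) tN3
    refine mul_right_cancel₀ hcnz ?_
    linear_combination (τ (n+1) * τ (n+2) * τ (n+(N:ℤ)+2) * τ (n+(N:ℤ)+3)) * e2'
  -- the 2-periodic coefficient J
  set Jq : ℤ → K := fun m =>
    (τ m * τ (m+(N:ℤ)+2) - α * (τ (m+2) * τ (m+(N:ℤ)))) / (τ (m+1) * τ (m+(N:ℤ)+1)) with hJq
  have hbil : ∀ m : ℤ, τ m * τ (m+(N:ℤ)+2) - α * (τ (m+2) * τ (m+(N:ℤ)))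
      = Jq m * (τ (m+1) * τ (m+(N:ℤ)+1)) := by
    intro m
    simp only [hJq]
    rw [div_mul_cancel₀ _ (mul_ne_zero (hτ _) (hτ _))]
  have hJ2 : ∀ m : ℤ, Jq (m+2) = Jq m := by
    intro m
    simp only [hJq]
    rw [show m+2+(N:ℤ)+2 = m+N+4 from by ring, show m+2+2 = m+4 from by ring,
        show m+2+(N:ℤ) = m+N+2 from by ring, show m+2+1 = m+3 from by ring,
        show m+(N:ℤ)+2+1 = m+N+3 from by ring]
    rw [div_eq_div_iff (mul_ne_zero (hτ _) (hτ _)) (mul_ne_zero (hτ _) (hτ _))]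
    exact hJstep m
  have hJadd : ∀ (k : ℕ) (m : ℤ), Jq (m + 2*(k:ℤ)) = Jq m := by
    intro k
    induction k with
    | zero => intro m; norm_num
    | succ k ih =>
      intro m
      have e : m + 2*(((k+1):ℕ):ℤ) = (m + 2*(k:ℤ)) + 2 := by push_cast; ring
      rw [e, hJ2 (m + 2*(k:ℤ)), ih m]
  have hJN : ∀ m : ℤ, Jq (m + (N:ℤ)) = Jq m := by
    intro m
    have e : m + (N:ℤ) = m + 2*(M:ℤ) := by rw [hM]; push_cast; ring
    rw [e, hJadd M m]
  -- the key three-term identity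
  have key : ∀ m : ℤ, (τ m * τ (m+2*(N:ℤ)+1) + α * (τ (m+1) * τ (m+2*(N:ℤ)))) * τ (m+(N:ℤ)+2)
      = (τ (m+1) * τ (m+2*(N:ℤ)+2) + α * (τ (m+2) * τ (m+2*(N:ℤ)+1))) * τ (m+(N:ℤ)) := by
    intro m
    have A := hbil m
    have B := hbil (m + (N:ℤ))
    rw [hJN m] at B
    rw [show m+(N:ℤ)+(N:ℤ)+2 = m+2*(N:ℤ)+2 from by ring,
        show m+(N:ℤ)+(N:ℤ)+1 = m+2*(N:ℤ)+1 from by ring,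
        show m+(N:ℤ)+(N:ℤ) = m+2*(N:ℤ) from by ring] at B
    linear_combination τ (m+2*(N:ℤ)+1) * A - τ (m+1) * B
  -- Kf is a discrete invariant
  have hKstep : ∀ m : ℤ, Kf (m+1) = Kf m := by
    intro m
    rw [hKf m, hKf (m+1)]
    rw [show m+1+2*(N:ℤ)+1 = m+2*(N:ℤ)+2 from by ring,
        show m+1+1 = m+2 from by ring,
        show m+1+2*(N:ℤ) = m+2*(N:ℤ)+1 from by ring,
        show m+1+(N:ℤ) = m+(N:ℤ)+1 from by ring,
        show m+(N:ℤ)+1+1 = m+(N:ℤ)+2 from by ring]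
    rw [div_eq_div_iff (mul_ne_zero (hτ _) (hτ _)) (mul_ne_zero (hτ _) (hτ _))]
    linear_combination (-(τ (m+(N:ℤ)+1))) * key m
  have hconst : ∀ n : ℤ, Kf n = Kf 0 := by
    intro n
    induction n using Int.induction_on with
    | zero => rfl
    | succ k ih => rw [hKstep (k:ℤ), ih]
    | pred k ih =>
      have h := hKstep (-(k:ℤ) - 1)
      rw [show -(k:ℤ) - 1 + 1 = -(k:ℤ) from by ring] at h
      rw [← h]
      exact ih
  refine ⟨hconst, ?_⟩
  intro n
  have h := hKf n
  rw [hconst n, eq_div_iff (mul_ne_zero (hτ _) (hτ _))] at h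
  linear_combination -h
end

section
/- Let K be a field, N ≥ 3 an ODD integer, and α, β ∈ K. Suppose τ : ℤ → K satisfies τ_n ≠ 0 for all n, and u_n := τ_{n+3}τ_n/(τ_{n+2}τ_{n+1}) satisfies the generalized DTKQ equation of order N with parameters α, β for all n ∈ ℤ. Then the quantity K̄_n := (τ_n·τ_{n+2N+2} − α²·τ_{n+2}·τ_{n+2N})/(τ_{n+N+1})² is independent of n; equivalently, τ satisfies the bilinear equation τ_{n+2N+2}τ_n = α²·τ_{n+2N}τ_{n+2} + K̄·(τ_{n+N+1})² for all n, with the constant K̄ := K̄_0. -/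
/-- for odd `N`, the tau function of a solution of the generalized DTKQ
equation satisfies the bilinear equation
`τ_{n+2N+2} τ_n = α² τ_{n+2N} τ_{n+2} + K̄ (τ_{n+N+1})²` with constant `K̄`. -/
theorem dtkq_odd_second_bilinear {K : Type*} [Field K] (N : ℕ) (hN : 3 ≤ N)
    (hNodd : Odd N) (α β : K)
    (τ : ℤ → K) (hτ : ∀ n, τ n ≠ 0)
    (u : ℤ → K) (hu : ∀ n : ℤ, u n = τ (n + 3) * τ n / (τ (n + 2) * τ (n + 1)))
    (hDTKQ : ∀ n : ℤ,
      ((∑ j ∈ Finset.range (N + 1), u (n + j)) + β) *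
        (∏ k ∈ Finset.range (N - 1), u (n + k + 1)) = α)
    (Kbar : ℤ → K)
    (hKbar : ∀ n : ℤ, Kbar n =
      (τ n * τ (n + 2 * N + 2) - α ^ 2 * (τ (n + 2) * τ (n + 2 * N))) /
        (τ (n + N + 1)) ^ 2) :
    (∀ n : ℤ, Kbar n = Kbar 0) ∧
      (∀ n : ℤ, τ (n + 2 * N + 2) * τ n =
        α ^ 2 * (τ (n + 2 * N) * τ (n + 2)) + Kbar 0 * (τ (n + N + 1)) ^ 2) := by
  obtain ⟨kk, hkk⟩ := hNodd
  -- telescoping product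
  have prod_tele : ∀ (m : ℕ) (n : ℤ),
      (∏ k ∈ Finset.range m, u (n + k + 1)) =
        τ (n + m + 3) * τ (n + 1) / (τ (n + 3) * τ (n + m + 1)) := by
    intro m
    induction m with
    | zero =>
      intro n
      rw [Finset.prod_range_zero]
      push_cast
      rw [show n + (0:ℤ) + 3 = n + 3 from by ring, show n + (0:ℤ) + 1 = n + 1 from by ring,
        div_self (mul_ne_zero (hτ _) (hτ _))]
    | succ m ih =>
      intro n
      rw [Finset.prod_range_succ, ih, hu (n + m + 1)]
      push_cast
      field_simp [hτ]
      ring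
  have hNcast : ((N - 1 : ℕ) : ℤ) = (N : ℤ) - 1 := by omega
  have hE : ∀ n : ℤ,
      ((∑ j ∈ Finset.range (N + 1), u (n + j)) + β) * (τ (n + N + 2) * τ (n + 1)) =
        α * (τ (n + 3) * τ (n + N)) := by
    intro n
    have h := hDTKQ n
    rw [prod_tele (N - 1) n, hNcast] at h
    rw [show n + ((N : ℤ) - 1) + 3 = n + N + 2 from by ring,
      show n + ((N : ℤ) - 1) + 1 = n + N from by ring] at h
    field_simp [hτ] at h
    linear_combination h
  have sum_shift : ∀ n : ℤ,
      (∑ j ∈ Finset.range (N + 1), u (n + 1 + j)) =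
        (∑ j ∈ Finset.range (N + 1), u (n + j)) + u (n + N + 1) - u n := by
    intro n
    have h1 := Finset.sum_range_succ (fun j : ℕ => u (n + j)) (N + 1)
    have h2 := Finset.sum_range_succ' (fun j : ℕ => u (n + j)) (N + 1)
    simp only [Nat.cast_zero, add_zero, Nat.cast_add, Nat.cast_one] at h1 h2
    have h3 : (∑ j ∈ Finset.range (N + 1), u (n + ((j : ℤ) + 1))) =
        ∑ j ∈ Finset.range (N + 1), u (n + 1 + j) := by
      apply Finset.sum_congr rfl
      intro j _
      congr 1
      ring
    rw [h3] at h2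
    rw [show n + ((N : ℤ) + 1) = n + N + 1 from by ring] at h1
    linear_combination h1 - h2
  set F : ℤ → K := fun m =>
    (τ m * τ (m + N + 2) - α * (τ (m + 2) * τ (m + N))) / (τ (m + 1) * τ (m + N + 1))
    with hFdef
  have hstar : ∀ m : ℤ, τ m * τ (m + N + 2) =
      α * (τ (m + 2) * τ (m + N)) + F m * (τ (m + 1) * τ (m + N + 1)) := by
    intro m
    simp only [hFdef]
    rw [div_mul_cancel₀ _ (mul_ne_zero (hτ _) (hτ _))]
    ring
  have hF2 : ∀ m : ℤ, F (m + 2) = F m := by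
    intro n
    have e1 := hE n
    have e2 := hE (n + 1)
    rw [sum_shift n, hu n, hu (n + N + 1)] at e2
    field_simp [hτ] at e2
    have key : ((τ (n+2) * τ (n+N+4) - α * (τ (n+4) * τ (n+N+2))) * (τ (n+1) * τ (n+N+1)) -
        (τ n * τ (n+N+2) - α * (τ (n+2) * τ (n+N))) * (τ (n+3) * τ (n+N+3)))
          * (τ (n+N+3) * τ (n+2)) = 0 := by
      linear_combination (norm := ring_nf) e2 - (τ (n+N+3)^2 * τ (n+2)^2) * e1
    have key2 := (mul_eq_zero.mp key).resolve_right (mul_ne_zero (hτ _) (hτ _))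
    simp only [hFdef]
    rw [div_eq_div_iff (mul_ne_zero (hτ _) (hτ _)) (mul_ne_zero (hτ _) (hτ _))]
    linear_combination (norm := ring_nf) key2
  have hF2k : ∀ (j : ℕ) (m : ℤ), F (m + 2 * j) = F m := by
    intro j
    induction j with
    | zero => intro m; norm_num
    | succ j ih =>
      intro m
      have e : m + 2 * ((j : ℤ) + 1) = m + 2 + 2 * j := by ring
      push_cast
      rw [e]
      exact (ih (m + 2)).trans (hF2 m)
  have hFN : ∀ m : ℤ, F (m + N) = F (m + 1) := by
    intro m
    rw [show m + (N : ℤ) = m + 1 + 2 * (kk : ℕ) from by omega]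
    exact hF2k kk (m + 1)
  have hstar' : ∀ n : ℤ, τ (n + N) * τ (n + 2 * N + 2) =
      α * (τ (n + N + 2) * τ (n + 2 * N)) + F (n + 1) * (τ (n + N + 1) * τ (n + 2 * N + 1)) := by
    intro n
    have h := hstar (n + N)
    rw [hFN n] at h
    linear_combination (norm := ring_nf) h
  have hKexpr : ∀ n : ℤ, Kbar n =
      (α * F n * (τ (n + 1) * τ (n + 2 * N)) + F (n + 1) * (τ n * τ (n + 2 * N + 1))) /
        (τ (n + N) * τ (n + N + 1)) := by
    intro n
    rw [hKbar n, div_eq_div_iff (pow_ne_zero 2 (hτ _)) (mul_ne_zero (hτ _) (hτ _))]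
    linear_combination (norm := ring_nf)
      (τ n * τ (n + N + 1)) * hstar' n + (α * τ (n + 2 * N) * τ (n + N + 1)) * hstar n
  have hKstep : ∀ n : ℤ, Kbar (n + 1) = Kbar n := by
    intro n
    rw [hKexpr (n + 1), hKexpr n]
    have eF : F (n + 1 + 1) = F n := by
      rw [show n + 1 + 1 = n + 2 from by ring]; exact hF2 n
    rw [eF, div_eq_div_iff (mul_ne_zero (hτ _) (hτ _)) (mul_ne_zero (hτ _) (hτ _))]
    linear_combination (norm := ring_nf)
      (-(F (n + 1)) * τ (n + 2 * N + 1) * τ (n + N + 1)) * hstar n +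
        (F n * τ (n + 1) * τ (n + N + 1)) * hstar' n
  have hconst : ∀ n : ℤ, Kbar n = Kbar 0 := by
    intro n
    induction n using Int.induction_on with
    | zero => rfl
    | succ i ih => rw [hKstep i]; exact ih
    | pred i ih =>
      have h := hKstep (-(i : ℤ) - 1)
      rw [show -(i : ℤ) - 1 + 1 = -(i : ℤ) from by ring] at h
      rw [← h]
      exact ih
  refine ⟨hconst, fun n => ?_⟩
  rw [← hconst n, hKbar n, div_mul_cancel₀ _ (pow_ne_zero 2 (hτ _))]
  ring
end

section
/- Let K be a field, N ≥ 2 an integer, and α, β ∈ K. Suppose τ : ℤ → K satisfies τ_n ≠ 0 for all n and satisfies the multilinear equation τ_{n+N+3}·τ_{n+N}²·∏_{j=1}^{N−1} τ_{n+j} = α·τ_{n+3}·τ_{n+N}·∏_{j=2}^{N+1} τ_{n+j} − β·∏_{j=1}^{N+2} τ_{n+j} − τ_n·τ_{n+3}·∏_{j=3}^{N+2} τ_{n+j} − ∑_{k=1}^{N−1} τ_{n+k}·τ_{n+k+3}·∏_{j=1, j≠k+1, j≠k+2}^{N+2} τ_{n+j} for all n ∈ ℤ. Then u_n := τ_{n+3}τ_n/(τ_{n+2}τ_{n+1})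 satisfies the generalized DTKQ equation of order N with parameters α, β for all n ∈ ℤ. -/
private lemma dtkq_telescope {K : Type*} [Field K] (τ : ℤ → K) (hτ : ∀ n, τ n ≠ 0)
    (u : ℤ → K) (hu : ∀ n : ℤ, u n = τ (n + 3) * τ n / (τ (n + 2) * τ (n + 1)))
    (n : ℤ) : ∀ L : ℕ, ∏ k ∈ Finset.range L, u (n + k + 1) =
      τ (n + L + 3) * τ (n + 1) / (τ (n + L + 1) * τ (n + 3)) := by
  intro L
  induction L with
  | zero =>
      simp only [Finset.range_zero, Finset.prod_empty, Nat.cast_zero, add_zero]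
      rw [mul_comm (τ (n + 1)) (τ (n + 3)), div_self (mul_ne_zero (hτ _) (hτ _))]
  | succ L ih =>
      rw [Finset.prod_range_succ, ih, hu (n + L + 1)]
      have e1 : n + (L : ℤ) + 1 + 3 = n + (L : ℤ) + 4 := by ring
      have e2 : n + (L : ℤ) + 1 + 2 = n + (L : ℤ) + 3 := by ring
      have e3 : n + (L : ℤ) + 1 + 1 = n + (L : ℤ) + 2 := by ring
      have e4 : n + ((L : ℕ) + 1 : ℕ) + 3 = n + (L : ℤ) + 4 := by push_cast; ring
      have e5 : n + ((L : ℕ) + 1 : ℕ) + 1 = n + (L : ℤ) + 2 := by push_cast; ring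
      rw [e1, e2, e3, e4, e5]
      have h1 := hτ (n + 1)
      have h3 := hτ (n + 3)
      have hL1 := hτ (n + L + 1)
      have hL2 := hτ (n + L + 2)
      have hL3 := hτ (n + L + 3)
      have hL4 := hτ (n + L + 4)
      field_simp

/-- if the tau function satisfies the multilinear (Laurentified) equation,
then `u_n = τ_{n+3}τ_n/(τ_{n+2}τ_{n+1})` satisfies the generalized DTKQ equation. -/
theorem multilinear_gives_dtkq {K : Type*} [Field K] (N : ℕ) (hN : 2 ≤ N) (α β : K)
    (τ : ℤ → K) (hτ : ∀ n, τ n ≠ 0)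
    (hmulti : ∀ n : ℤ,
      τ (n + N + 3) * (τ (n + N)) ^ 2 * ∏ j ∈ Finset.range (N - 1), τ (n + j + 1) =
        α * τ (n + 3) * τ (n + N) * ∏ j ∈ Finset.range N, τ (n + j + 2)
        - β * ∏ j ∈ Finset.range (N + 2), τ (n + j + 1)
        - τ n * τ (n + 3) * ∏ j ∈ Finset.range N, τ (n + j + 3)
        - ∑ k ∈ Finset.range (N - 1), τ (n + k + 1) * τ (n + k + 4) *
            ∏ j ∈ ((Finset.Icc 1 (N + 2)).erase (k + 2)).erase (k + 3), τ (n + j))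
    (u : ℤ → K) (hu : ∀ n : ℤ, u n = τ (n + 3) * τ n / (τ (n + 2) * τ (n + 1))) :
    ∀ n : ℤ,
      ((∑ j ∈ Finset.range (N + 1), u (n + j)) + β) *
        (∏ k ∈ Finset.range (N - 1), u (n + k + 1)) = α := by
  obtain ⟨M, rfl⟩ : ∃ M, N = M + 2 := ⟨N - 2, by omega⟩
  intro n
  have h := hmulti n
  simp only [show M + 2 - 1 = M + 1 by omega, show M + 2 + 2 = M + 4 by omega,
    show M + 2 + 1 = M + 3 by omega] at h ⊢
  push_cast at h ⊢
  -- hIcc : the big product over a shifted range equals the product over Icc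
  have hIcc : (∏ j ∈ Finset.range (M + 4), τ (n + j + 1)) =
      ∏ j ∈ Finset.Icc 1 (M + 4), τ (n + j) := by
    rw [← Finset.Ico_add_one_right_eq_Icc, Finset.prod_Ico_eq_prod_range]
    rw [show M + 4 + 1 - 1 = M + 4 by omega]
    refine Finset.prod_congr rfl fun j _ => ?_
    congr 1
    push_cast
    ring
  -- hP1 : peel the first two factors
  have hP1 : (∏ j ∈ Finset.range (M + 4), τ (n + j + 1)) =
      τ (n + 1) * τ (n + 2) * ∏ j ∈ Finset.range (M + 2), τ (n + j + 3) := by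
    rw [show M + 4 = M + 3 + 1 by omega, Finset.prod_range_succ',
      show M + 3 = M + 2 + 1 by omega, Finset.prod_range_succ']
    rw [Finset.prod_congr rfl
      (fun j _ => show τ (n + ((j : ℕ) + 1 + 1 : ℕ) + 1) = τ (n + j + 3) by
        congr 1; push_cast; ring)]
    rw [show τ (n + ((0 : ℕ) + 1 : ℕ) + 1) = τ (n + 2) by congr 1; push_cast; ring,
      show τ (n + ((0 : ℕ) : ℕ) + 1) = τ (n + 1) by congr 1; push_cast; ring]
    ring
  -- hP2 : peel the last three factors
  have hP2 : (∏ j ∈ Finset.range (M + 4), τ (n + j + 1)) =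
      (∏ j ∈ Finset.range (M + 1), τ (n + j + 1)) *
        (τ (n + M + 2) * τ (n + M + 3) * τ (n + M + 4)) := by
    rw [show M + 4 = M + 3 + 1 by omega, Finset.prod_range_succ,
      show M + 3 = M + 2 + 1 by omega, Finset.prod_range_succ,
      show M + 2 = M + 1 + 1 by omega, Finset.prod_range_succ]
    rw [show τ (n + ((M + 1 : ℕ) : ℕ) + 1) = τ (n + M + 2) by congr 1; push_cast; ring,
      show τ (n + ((M + 2 : ℕ) : ℕ) + 1) = τ (n + M + 3) by congr 1; push_cast; ring,
      show τ (n + ((M + 3 : ℕ) : ℕ) + 1) = τ (n + M + 4) by congr 1; push_cast; ring]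
    ring
  -- hP4 : peel first and last factor
  have hP4 : (∏ j ∈ Finset.range (M + 4), τ (n + j + 1)) =
      τ (n + 1) * τ (n + M + 4) * ∏ j ∈ Finset.range (M + 2), τ (n + j + 2) := by
    rw [show M + 4 = M + 3 + 1 by omega, Finset.prod_range_succ',
      show M + 3 = M + 2 + 1 by omega, Finset.prod_range_succ]
    rw [Finset.prod_congr rfl
      (fun j _ => show τ (n + ((j : ℕ) + 1 : ℕ) + 1) = τ (n + j + 2) by
        congr 1; push_cast; ring)]
    rw [show τ (n + ((M + 2 : ℕ) + 1 : ℕ) + 1) = τ (n + M + 4) by congr 1; push_cast; ring,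
      show τ (n + ((0 : ℕ) : ℕ) + 1) = τ (n + 1) by congr 1; push_cast; ring]
    ring
  -- hP3 : extract two factors around position k
  have hP3 : ∀ k ∈ Finset.range (M + 1),
      (∏ j ∈ Finset.range (M + 4), τ (n + j + 1)) =
      τ (n + k + 2) * τ (n + k + 3) *
        ∏ j ∈ ((Finset.Icc 1 (M + 4)).erase (k + 2)).erase (k + 3), τ (n + j) := by
    intro k hk
    rw [Finset.mem_range] at hk
    have hk2 : k + 2 ∈ Finset.Icc 1 (M + 4) := by
      rw [Finset.mem_Icc]; omega
    have hk3 : k + 3 ∈ (Finset.Icc 1 (M + 4)).erase (k + 2) := by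
      rw [Finset.mem_erase, Finset.mem_Icc]; omega
    rw [hIcc, ← Finset.mul_prod_erase _ _ hk2, ← Finset.mul_prod_erase _ _ hk3]
    rw [show ((k : ℕ) + 2 : ℕ) = ((k + 2 : ℕ) : ℕ) from rfl]
    push_cast
    ring
  -- term identities
  have ha : u n * (∏ j ∈ Finset.range (M + 4), τ (n + j + 1)) =
      τ n * τ (n + 3) * ∏ j ∈ Finset.range (M + 2), τ (n + j + 3) := by
    rw [hu n, hP1]
    have h1 := hτ (n + 1)
    have h2 := hτ (n + 2)
    field_simp
  have hb : u (n + M + 2) * (∏ j ∈ Finset.range (M + 4), τ (n + j + 1)) =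
      τ (n + M + 5) * τ (n + M + 2) ^ 2 * ∏ j ∈ Finset.range (M + 1), τ (n + j + 1) := by
    rw [hu (n + M + 2), hP2]
    rw [show n + (M : ℤ) + 2 + 3 = n + M + 5 by ring, show n + (M : ℤ) + 2 + 2 = n + M + 4 by ring,
      show n + (M : ℤ) + 2 + 1 = n + M + 3 by ring]
    have h3 := hτ (n + M + 3)
    have h4 := hτ (n + M + 4)
    field_simp
  have hc : ∀ k ∈ Finset.range (M + 1),
      u (n + k + 1) * (∏ j ∈ Finset.range (M + 4), τ (n + j + 1)) =
      τ (n + k + 1) * τ (n + k + 4) *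
        ∏ j ∈ ((Finset.Icc 1 (M + 4)).erase (k + 2)).erase (k + 3), τ (n + j) := by
    intro k hk
    rw [hu (n + k + 1), hP3 k hk]
    rw [show n + (k : ℤ) + 1 + 3 = n + k + 4 by ring, show n + (k : ℤ) + 1 + 2 = n + k + 3 by ring,
      show n + (k : ℤ) + 1 + 1 = n + k + 2 by ring]
    have h2 := hτ (n + k + 2)
    have h3 := hτ (n + k + 3)
    field_simp
  have hsum : (∑ k ∈ Finset.range (M + 1), u (n + k + 1)) *
      (∏ j ∈ Finset.range (M + 4), τ (n + j + 1)) =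
      ∑ k ∈ Finset.range (M + 1), τ (n + k + 1) * τ (n + k + 4) *
        ∏ j ∈ ((Finset.Icc 1 (M + 4)).erase (k + 2)).erase (k + 3), τ (n + j) := by
    rw [Finset.sum_mul]
    exact Finset.sum_congr rfl hc
  -- decompose the sum in the goal
  have hS : (∑ j ∈ Finset.range (M + 3), u (n + j)) =
      u n + (∑ k ∈ Finset.range (M + 1), u (n + k + 1)) + u (n + M + 2) := by
    rw [show M + 3 = M + 2 + 1 by omega, Finset.sum_range_succ',
      show M + 2 = M + 1 + 1 by omega, Finset.sum_range_succ]
    rw [Finset.sum_congr rfl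
      (fun k _ => show u (n + ((k : ℕ) + 1 : ℕ)) = u (n + k + 1) by
        congr 1; push_cast; ring)]
    rw [show u (n + ((M + 1 : ℕ) + 1 : ℕ)) = u (n + M + 2) by congr 1; push_cast; ring,
      show u (n + ((0 : ℕ) : ℕ)) = u n by congr 1; push_cast; ring]
    ring
  -- telescoping
  have hQ : (∏ k ∈ Finset.range (M + 1), u (n + k + 1)) =
      τ (n + M + 4) * τ (n + 1) / (τ (n + M + 2) * τ (n + 3)) := by
    rw [dtkq_telescope τ hτ u hu n (M + 1)]
    rw [show n + ((M : ℕ) + 1 : ℕ) + 3 = n + M + 4 by push_cast; ring,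
      show n + ((M : ℕ) + 1 : ℕ) + 1 = n + M + 2 by push_cast; ring]
  rw [show n + ((M : ℤ) + 2) + 3 = n + M + 5 by ring,
    show n + ((M : ℤ) + 2) = n + M + 2 by ring] at h
  rw [hS, hQ, ← mul_div_assoc, div_eq_iff (mul_ne_zero (hτ _) (hτ _))]
  apply mul_right_cancel₀ (Finset.prod_ne_zero_iff.mpr
    (fun j _ => hτ (n + j + 2)) :
    (∏ j ∈ Finset.range (M + 2), τ (n + j + 2)) ≠ 0)
  linear_combination ha + hb + hsum + h - (u n + (∑ k ∈ Finset.range (M + 1), u (n + k + 1)) +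
      u (n + M + 2) + β) * hP4
end

section
/- Let N ≥ 2 be an integer and suppose d : ℕ → ℝ satisfies, for all n ≥ 0, the tropical multilinear equation d_{n+N+3} + 2·d_{n+N} + ∑_{j=1}^{N−1} d_{n+j} = max M_n, where M_n is the finite set consisting of the N+2 numbers: (i) d_{n+3} + d_{n+N} + ∑_{j=2}^{N+1} d_{n+j}; (ii) ∑_{j=1}^{N+2} d_{n+j}; (iii) d_n + d_{n+3} + ∑_{j=3}^{N+2} d_{n+j}; and (iv) for each k = 1, …, N−1, the number d_{n+k} + d_{n+k+3} + ∑_{j=1, j≠k+1, j≠k+2}^{N+2} d_{n+j}. Then the sequence U_n := d_{n+3} − d_{n+2} − d_{n+1} + d_n satisfies, for all n ≥ 0, the tropical equation U_{n+N} = max(0, −S_n, U_n, U_{n+1}, …, U_{n+N−1}), where S_n := ∑_{j=1}^{N−1} U_{n+j}. -/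
private lemma sup'_range_succ (f : ℕ → ℝ) (m : ℕ) :
    (Finset.range (m + 2)).sup' (Finset.nonempty_range_iff.mpr (by omega)) f =
      max (f 0) ((Finset.range (m + 1)).sup' (Finset.nonempty_range_iff.mpr (by omega))
        (fun k => f (k + 1))) := by
  apply le_antisymm
  · apply Finset.sup'_le
    intro i hi
    simp only [Finset.mem_range] at hi
    rcases i with _ | k
    · exact le_max_left _ _
    · exact le_max_of_le_right
        (Finset.le_sup' (b := k) (fun j => f (j + 1)) (Finset.mem_range.mpr (by omega)))
  · apply max_le
    · exact Finset.le_sup' f (Finset.mem_range.mpr (by omega))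
    · apply Finset.sup'_le
      intro k hk
      simp only [Finset.mem_range] at hk
      exact Finset.le_sup' f (Finset.mem_range.mpr (by omega))

/-- the tropical substitution `U_n = d_{n+3} - d_{n+2} - d_{n+1} + d_n`
sends solutions of the tropical multilinear equation to solutions of the tropical
DTKQ equation `U_{n+N} = [max(-S_n, U_n, …, U_{n+N-1})]₊`. -/
theorem tropical_multilinear_to_tropical_dtkq (N : ℕ) (hN : 2 ≤ N) (d : ℕ → ℝ)
    (hd : ∀ n : ℕ,
      d (n + N + 3) + 2 * d (n + N) + ∑ j ∈ Finset.range (N - 1), d (n + j + 1) =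
        max (d (n + 3) + d (n + N) + ∑ j ∈ Finset.range N, d (n + j + 2))
          (max (∑ j ∈ Finset.range (N + 2), d (n + j + 1))
            (max (d n + d (n + 3) + ∑ j ∈ Finset.range N, d (n + j + 3))
              ((Finset.range (N - 1)).sup'
                (Finset.nonempty_range_iff.mpr (by omega))
                (fun k => d (n + k + 1) + d (n + k + 4) +
                  ∑ j ∈ ((Finset.Icc 1 (N + 2)).erase (k + 2)).erase (k + 3), d (n + j))))))
    (U : ℕ → ℝ) (hU : ∀ n : ℕ, U n = d (n + 3) - d (n + 2) - d (n + 1) + d n)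
    (S : ℕ → ℝ) (hS : ∀ n : ℕ, S n = ∑ j ∈ Finset.range (N - 1), U (n + j + 1)) :
    ∀ n : ℕ, U (n + N) =
      max (max 0 (-S n))
        ((Finset.range N).sup' (Finset.nonempty_range_iff.mpr (by omega))
          (fun j => U (n + j))) := by
  obtain ⟨m, rfl⟩ : ∃ m, N = m + 2 := ⟨N - 2, by omega⟩
  intro n
  have hdn := hd n
  simp only [show n + (m + 2) + 3 = n + m + 5 from by omega,
    show n + (m + 2) = n + m + 2 from by omega,
    show m + 2 - 1 = m + 1 from by omega,
    show m + 2 + 2 = m + 4 from by omega] at hdn ⊢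
  set T : ℝ := ∑ j ∈ Finset.range (m + 4), d (n + j + 1) with hT
  -- telescoping value of S n
  have hSn : S n = d (n + m + 4) - d (n + m + 2) - d (n + 3) + d (n + 1) := by
    rw [hS]
    have hc : ∑ j ∈ Finset.range (m + 2 - 1), U (n + j + 1) =
        ∑ j ∈ Finset.range (m + 1),
          ((fun j => d (n + j + 3) - d (n + j + 1)) (j + 1) -
           (fun j => d (n + j + 3) - d (n + j + 1)) j) := by
      rw [show m + 2 - 1 = m + 1 from by omega]
      refine Finset.sum_congr rfl fun j _ => ?_
      rw [hU]
      simp only [show n + j + 1 + 3 = n + (j + 1) + 3 from by omega,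
        show n + j + 1 + 2 = n + j + 3 from by omega,
        show n + j + 1 + 1 = n + (j + 1) + 1 from by omega]
      ring
    rw [hc, Finset.sum_range_sub (fun j => d (n + j + 3) - d (n + j + 1)) (m + 1)]
    simp only [show n + (m + 1) + 3 = n + m + 4 from by omega,
      show n + (m + 1) + 1 = n + m + 2 from by omega, show n + 0 + 3 = n + 3 from by omega,
      show n + 0 + 1 = n + 1 from by omega]
    ring
  -- decompositions of T
  have hT3 : T = (∑ j ∈ Finset.range (m + 2), d (n + j + 2)) + d (n + 1) + d (n + m + 4) := by
    rw [hT, Finset.sum_range_succ' (fun j => d (n + j + 1)) (m + 3),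
      Finset.sum_range_succ (fun j => d (n + (j + 1) + 1)) (m + 2)]
    simp only [show ∀ j, n + (j + 1) + 1 = n + j + 2 from fun j => by omega,
      show n + 0 + 1 = n + 1 from by omega, show n + (m + 2) + 2 = n + m + 4 from by omega]
    try ring
  have hT4 : T = d (n + 1) + d (n + 2) + ∑ j ∈ Finset.range (m + 2), d (n + j + 3) := by
    rw [hT, Finset.sum_range_succ' (fun j => d (n + j + 1)) (m + 3),
      Finset.sum_range_succ' (fun j => d (n + (j + 1) + 1)) (m + 2)]
    simp only [show ∀ j, n + (j + 1 + 1) + 1 = n + j + 3 from fun j => by omega,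
      show n + 0 + 1 = n + 1 from by omega, show n + (0 + 1) + 1 = n + 2 from by omega]
    try ring
  have hTA : T = (∑ j ∈ Finset.range (m + 1), d (n + j + 1)) + d (n + m + 2) +
      d (n + m + 3) + d (n + m + 4) := by
    rw [hT, Finset.sum_range_succ (fun j => d (n + j + 1)) (m + 3),
      Finset.sum_range_succ (fun j => d (n + j + 1)) (m + 2),
      Finset.sum_range_succ (fun j => d (n + j + 1)) (m + 1)]
    simp only [show n + (m + 3) + 1 = n + m + 4 from by omega,
      show n + (m + 2) + 1 = n + m + 3 from by omega,
      show n + (m + 1) + 1 = n + m + 2 from by omega]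
    try ring
  have hTIcc : T = ∑ j ∈ Finset.Icc 1 (m + 4), d (n + j) := by
    rw [hT, show Finset.Icc 1 (m + 4) = Finset.Ico 1 (m + 4 + 1) from
      (Finset.Ico_add_one_right_eq_Icc 1 (m + 4)).symm, Finset.sum_Ico_eq_sum_range]
    refine Finset.sum_congr (by congr 1) fun j _ => ?_
    congr 1
    omega
  have hE : ∀ k, k ∈ Finset.range (m + 1) →
      ∑ j ∈ ((Finset.Icc 1 (m + 4)).erase (k + 2)).erase (k + 3), d (n + j) =
        T - d (n + k + 2) - d (n + k + 3) := by
    intro k hk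
    simp only [Finset.mem_range] at hk
    have h2 : (k + 2) ∈ Finset.Icc 1 (m + 4) := Finset.mem_Icc.mpr (by omega)
    have h3 : (k + 3) ∈ (Finset.Icc 1 (m + 4)).erase (k + 2) := by
      rw [Finset.mem_erase]
      exact ⟨by omega, Finset.mem_Icc.mpr (by omega)⟩
    have e3 := Finset.sum_erase_add ((Finset.Icc 1 (m + 4)).erase (k + 2))
      (fun j => d (n + j)) h3
    have e2 := Finset.sum_erase_add (Finset.Icc 1 (m + 4)) (fun j => d (n + j)) h2
    rw [hTIcc]
    simp only [show n + (k + 3) = n + k + 3 from by omega,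
      show n + (k + 2) = n + k + 2 from by omega] at e3 e2
    linarith
  -- pointwise identities
  have e0 : (0 : ℝ) + T = T := zero_add T
  have eS : -S n + T = d (n + 3) + d (n + m + 2) + ∑ j ∈ Finset.range (m + 2), d (n + j + 2) := by
    rw [hSn]; linarith [hT3]
  have eU0 : U (n + 0) + T = d n + d (n + 3) + ∑ j ∈ Finset.range (m + 2), d (n + j + 3) := by
    rw [hU]
    simp only [show n + 0 + 3 = n + 3 from by omega, show n + 0 + 2 = n + 2 from by omega,
      show n + 0 + 1 = n + 1 from by omega, show n + 0 = n from by omega]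
    linarith [hT4]
  have eUk : ∀ k ∈ Finset.range (m + 1), U (n + (k + 1)) + T =
      d (n + k + 1) + d (n + k + 4) +
        ∑ j ∈ ((Finset.Icc 1 (m + 4)).erase (k + 2)).erase (k + 3), d (n + j) := by
    intro k hk
    rw [hU, hE k hk]
    simp only [show n + (k + 1) + 3 = n + k + 4 from by omega,
      show n + (k + 1) + 2 = n + k + 3 from by omega,
      show n + (k + 1) + 1 = n + k + 2 from by omega,
      show n + (k + 1) = n + k + 1 from by omega]
    ring
  -- the key max identity
  have hM : max (max 0 (-S n)) ((Finset.range (m + 2)).sup'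
        (Finset.nonempty_range_iff.mpr (by omega)) (fun j => U (n + j))) + T =
      max (d (n + 3) + d (n + m + 2) + ∑ j ∈ Finset.range (m + 2), d (n + j + 2))
        (max T
          (max (d n + d (n + 3) + ∑ j ∈ Finset.range (m + 2), d (n + j + 3))
            ((Finset.range (m + 1)).sup' (Finset.nonempty_range_iff.mpr (by omega))
              (fun k => d (n + k + 1) + d (n + k + 4) +
                ∑ j ∈ ((Finset.Icc 1 (m + 4)).erase (k + 2)).erase (k + 3), d (n + j))))) := by
    have hsup : (Finset.range (m + 1)).sup' (Finset.nonempty_range_iff.mpr (by omega))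
        (fun k => U (n + (k + 1)) + T) =
        (Finset.range (m + 1)).sup' (Finset.nonempty_range_iff.mpr (by omega))
          (fun k => d (n + k + 1) + d (n + k + 4) +
            ∑ j ∈ ((Finset.Icc 1 (m + 4)).erase (k + 2)).erase (k + 3), d (n + j)) :=
      Finset.sup'_congr _ rfl eUk
    rw [← max_add_add_right, ← max_add_add_right, Finset.sup'_add,
      sup'_range_succ (fun j => U (n + j) + T) m, hsup, e0, eS, eU0, max_assoc, max_left_comm]
  -- finish
  have hU' : U (n + m + 2) = d (n + m + 5) - d (n + m + 4) - d (n + m + 3) + d (n + m + 2) := by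
    rw [hU]
  have key : U (n + m + 2) + T = max (max 0 (-S n)) ((Finset.range (m + 2)).sup'
      (Finset.nonempty_range_iff.mpr (by omega)) (fun j => U (n + j))) + T := by
    rw [hM, ← hdn]
    linarith [hTA]
  exact add_right_cancel key
end

section
/- Let K be a field, N ≥ 2 an integer, and α, β ∈ K. For a sequence w : ℤ → K with w_n ≠ 0 for all n, define γ_n[w] := ∏_{j=0}^{N} w_{n+j} − α/∏_{j=1}^{N−1} w_{n+j}, define 𝓔_n[w] := ∑_{j=0}^{N} w_{n+j}w_{n+j+1} + β − α/∏_{j=1}^{N−1} (w_{n+j}w_{n+j+1}), and define E_n[w] := w_{n+N+2}w_{n+N+1} − w_{n+1}w_n + (α/∏_{j=2}^{N} w_{n+j})·(1/∏_{k=1}^{N−1} w_{n+k} − 1/∏_{k=3}^{N+1} w_{n+k}). Then for every n ∈ ℤ the identities γ_{n+2}[w] − γ_n[w] = (∏_{j=2}^{N} w_{n+j})·(𝓔_{n+1}[w] − 𝓔_n[w]) = E_n[w]·∏_{j=2}^{N} w_{n+j} hold. In particular, if w satisfies the modified generalized DTKQ equation 𝓔_n[w] = 0 for all n, then γ_n[w]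 is a 2-integral: γ_{n+2}[w] = γ_n[w] for all n. -/
/-- the identities
`γ_{n+2}[w] - γ_n[w] = (∏_{j=2}^N w_{n+j})·(𝓔_{n+1}[w] - 𝓔_n[w]) = E_n[w]·∏_{j=2}^N w_{n+j}`,
so that `γ_n[w]` is a 2-integral of the modified generalized DTKQ equation `𝓔_n[w] = 0`. -/
theorem gamma_two_integral_identity {K : Type*} [Field K] (N : ℕ) (hN : 2 ≤ N) (α β : K)
    (w : ℤ → K) (hw : ∀ n, w n ≠ 0)
    (γ : ℤ → K)
    (hγ : ∀ n : ℤ, γ n =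
      (∏ j ∈ Finset.range (N + 1), w (n + j)) -
        α / ∏ j ∈ Finset.range (N - 1), w (n + j + 1))
    (E' : ℤ → K)
    (hE' : ∀ n : ℤ, E' n =
      (∑ j ∈ Finset.range (N + 1), w (n + j) * w (n + j + 1)) + β -
        α / ∏ j ∈ Finset.range (N - 1), (w (n + j + 1) * w (n + j + 2)))
    (E : ℤ → K)
    (hE : ∀ n : ℤ, E n =
      w (n + N + 2) * w (n + N + 1) - w (n + 1) * w n +
        (α / ∏ j ∈ Finset.range (N - 1), w (n + j + 2)) *
          (1 / ∏ k ∈ Finset.range (N - 1), w (n + k + 1) -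
            1 / ∏ k ∈ Finset.range (N - 1), w (n + k + 3))) :
    (∀ n : ℤ,
      γ (n + 2) - γ n =
        (∏ j ∈ Finset.range (N - 1), w (n + j + 2)) * (E' (n + 1) - E' n) ∧
      γ (n + 2) - γ n = E n * ∏ j ∈ Finset.range (N - 1), w (n + j + 2)) ∧
    ((∀ n : ℤ, E' n = 0) → ∀ n : ℤ, γ (n + 2) = γ n) := by
  obtain ⟨m, rfl⟩ : ∃ m, N = m + 2 := ⟨N - 2, by omega⟩
  have key : ∀ n : ℤ,
      γ (n + 2) - γ n =
        (∏ j ∈ Finset.range (m + 2 - 1), w (n + j + 2)) * (E' (n + 1) - E' n) ∧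
      γ (n + 2) - γ n = E n * ∏ j ∈ Finset.range (m + 2 - 1), w (n + j + 2) := by
    intro n
    have hγ2 := hγ (n + 2)
    have hγ0 := hγ n
    have hE1 := hE' (n + 1)
    have hE0 := hE' n
    have hEn := hE n
    simp only [show m + 2 - 1 = m + 1 from rfl, show m + 2 + 1 = m + 3 from rfl] at *
    clear hγ hE' hE
    set A := ∏ j ∈ Finset.range (m + 1), w (n + j + 1) with hAdef
    set B := ∏ j ∈ Finset.range (m + 1), w (n + j + 2) with hBdef
    set C := ∏ j ∈ Finset.range (m + 1), w (n + j + 3) with hCdef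
    have hA0 : A ≠ 0 := Finset.prod_ne_zero_iff.mpr fun j _ => hw _
    have hB0 : B ≠ 0 := Finset.prod_ne_zero_iff.mpr fun j _ => hw _
    have hC0 : C ≠ 0 := Finset.prod_ne_zero_iff.mpr fun j _ => hw _
    -- product expansions
    have hre : (∏ x ∈ Finset.range (m + 1), w (n + ((x + 1 + 1 : ℕ) : ℤ))) = B := by
      rw [hBdef]
      exact Finset.prod_congr rfl fun j _ => congrArg w (by push_cast; ring)
    have hPn : (∏ j ∈ Finset.range (m + 3), w (n + j)) = w n * w (n + 1) * B := by
      rw [Finset.prod_range_succ', Finset.prod_range_succ', hre]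
      norm_num
      ring
    have hPn2 : (∏ j ∈ Finset.range (m + 3), w (n + 2 + j))
        = B * (w (n + m + 3) * w (n + m + 4)) := by
      rw [show m + 3 = (m + 1) + 1 + 1 from rfl, Finset.prod_range_succ,
        Finset.prod_range_succ, hBdef]
      rw [Finset.prod_congr rfl fun j _ => congrArg w (by ring :
        (n : ℤ) + 2 + (j : ℕ) = n + j + 2)]
      rw [congrArg w (by push_cast; ring : (n : ℤ) + 2 + ((m : ℕ) + 1 : ℕ) = n + m + 3),
        congrArg w (by push_cast; ring : (n : ℤ) + 2 + ((m : ℕ) + 1 + 1 : ℕ) = n + m + 4)]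
      ring
    have hQ2 : (∏ j ∈ Finset.range (m + 1), w (n + 2 + j + 1)) = C := by
      rw [hCdef]
      exact Finset.prod_congr rfl fun j _ => congrArg w (by ring)
    have hSn : (∏ j ∈ Finset.range (m + 1), (w (n + j + 1) * w (n + j + 2))) = A * B := by
      rw [Finset.prod_mul_distrib]
    have hSn1 : (∏ j ∈ Finset.range (m + 1), (w (n + 1 + j + 1) * w (n + 1 + j + 2)))
        = B * C := by
      rw [Finset.prod_mul_distrib, hBdef, hCdef]
      rw [Finset.prod_congr rfl fun j _ => congrArg w (by ring :
          (n : ℤ) + 1 + (j : ℕ) + 1 = n + j + 2),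
        Finset.prod_congr rfl fun j _ => congrArg w (by ring :
          (n : ℤ) + 1 + (j : ℕ) + 2 = n + j + 3)]
    -- telescoping sum
    have hsum : (∑ j ∈ Finset.range (m + 3), w (n + 1 + j) * w (n + 1 + j + 1))
        = (∑ j ∈ Finset.range (m + 3), w (n + j) * w (n + j + 1))
          + w (n + m + 3) * w (n + m + 4) - w n * w (n + 1) := by
      have h3 : (∑ j ∈ Finset.range (m + 3), w (n + 1 + j) * w (n + 1 + j + 1))
          = ∑ j ∈ Finset.range (m + 3), w (n + (j + 1 : ℕ)) * w (n + (j + 1 : ℕ) + 1) :=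
        Finset.sum_congr rfl fun j _ => by
          refine congrArg₂ (· * ·) (congrArg w ?_) (congrArg w ?_) <;> push_cast <;> ring
      have h1 := Finset.sum_range_succ' (fun j : ℕ => w (n + j) * w (n + j + 1)) (m + 3)
      have h2 := Finset.sum_range_succ (fun j : ℕ => w (n + j) * w (n + j + 1)) (m + 3)
      rw [h3]
      push_cast at h1 h2 ⊢
      rw [show n + ((m : ℤ) + 3) + 1 = n + (m : ℤ) + 4 from by ring,
        show n + ((m : ℤ) + 3) = n + (m : ℤ) + 3 + 0 from by ring,
        show n + (m : ℤ) + 3 + 0 = n + (m : ℤ) + 3 from by ring] at h2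
      simp only [add_zero] at h1
      linear_combination h2 - h1
    push_cast at hEn
    rw [show n + ((m : ℤ) + 2) + 2 = n + (m : ℤ) + 4 from by ring,
      show n + ((m : ℤ) + 2) + 1 = n + (m : ℤ) + 3 from by ring] at hEn
    rw [hγ2, hγ0, hE1, hE0, hEn, hPn, hPn2, hQ2, hSn, hSn1, hsum]
    constructor
    · field_simp
      ring
    · field_simp
      ring
  refine ⟨key, fun hz n => ?_⟩
  have h := (key n).1
  rw [hz (n + 1), hz n] at h
  simpa [sub_eq_zero] using h
end

section
/- Let K be a field, N ≥ 2 an integer, and α, β ∈ K. Suppose τ : ℤ → K satisfies τ_n ≠ 0 for all n and satisfies the multilinear equation τ_{n+N+3}·τ_{n+N}²·∏_{j=1}^{N−1} τ_{n+j} = α·τ_{n+3}·τ_{n+N}·∏_{j=2}^{N+1} τ_{n+j} − β·∏_{j=1}^{N+2} τ_{n+j} − τ_n·τ_{n+3}·∏_{j=3}^{N+2} τ_{n+j} − ∑_{k=1}^{N−1} τ_{n+k}·τ_{n+k+3}·∏_{j=1, j≠k+1, j≠k+2}^{N+2} τ_{n+j} for all n ∈ ℤ. Then the quantity γ_n :=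 (τ_{n+N+2}τ_n − α·τ_{n+N}τ_{n+2})/(τ_{n+N+1}τ_{n+1}) is a 2-integral: γ_{n+2} = γ_n for all n ∈ ℤ. -/
open Finset

private lemma prodA {K : Type*} [Field K] (M : ℕ) (τ : ℤ → K) (n : ℤ) :
    (∏ j ∈ Finset.range (M+1), τ (n + j + 1)) * (τ (n + M + 2) * τ (n + M + 3) * τ (n + M + 4))
      = ∏ j ∈ Finset.range (M+4), τ (n + j + 1) := by
  rw [show M+4 = M+3+1 by omega, Finset.prod_range_succ _ (M+3),
    show M+3 = M+2+1 by omega, Finset.prod_range_succ _ (M+2),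
    show M+2 = M+1+1 by omega, Finset.prod_range_succ _ (M+1)]
  push_cast
  norm_num [add_comm, add_left_comm, add_assoc, mul_comm, mul_left_comm, mul_assoc]

private lemma prodB {K : Type*} [Field K] (M : ℕ) (τ : ℤ → K) (n : ℤ) :
    τ (n+1) * (∏ j ∈ Finset.range (M+2), τ (n + j + 2)) * τ (n + M + 4)
      = ∏ j ∈ Finset.range (M+4), τ (n + j + 1) := by
  rw [show M+4 = M+3+1 by omega, Finset.prod_range_succ' _ (M+3),
    show M+3 = M+2+1 by omega, Finset.prod_range_succ _ (M+2)]
  push_cast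
  norm_num [add_comm, add_left_comm, add_assoc, mul_comm, mul_left_comm, mul_assoc]

private lemma prodC {K : Type*} [Field K] (M : ℕ) (τ : ℤ → K) (n : ℤ) :
    τ (n+1) * τ (n+2) * ∏ j ∈ Finset.range (M+2), τ (n + j + 3)
      = ∏ j ∈ Finset.range (M+4), τ (n + j + 1) := by
  rw [show M+4 = M+3+1 by omega, Finset.prod_range_succ' _ (M+3),
    show M+3 = M+2+1 by omega, Finset.prod_range_succ' _ (M+2)]
  push_cast
  norm_num [add_comm, add_left_comm, add_assoc, mul_comm, mul_left_comm, mul_assoc]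

private lemma prodD {K : Type*} [Field K] (M : ℕ) (τ : ℤ → K) (n : ℤ) (k : ℕ) (hk : k < M+1) :
    τ (n + k + 2) * τ (n + k + 3) *
      ∏ j ∈ ((Finset.Icc 1 (M+4)).erase (k + 2)).erase (k + 3), τ (n + j)
      = ∏ j ∈ Finset.range (M+4), τ (n + j + 1) := by
  have h2 : (k+2) ∈ Finset.Icc 1 (M+4) := by simp only [Finset.mem_Icc]; omega
  have h3 : (k+3) ∈ (Finset.Icc 1 (M+4)).erase (k+2) := by
    simp only [Finset.mem_erase, Finset.mem_Icc]; omega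
  have e1 := Finset.mul_prod_erase ((Finset.Icc 1 (M+4)).erase (k+2)) (fun j => τ (n + j)) h3
  have e2 := Finset.mul_prod_erase (Finset.Icc 1 (M+4)) (fun j => τ (n + j)) h2
  have e3 : ∏ j ∈ Finset.Icc 1 (M+4), τ (n + j) = ∏ j ∈ Finset.range (M+4), τ (n + j + 1) := by
    rw [← Finset.Ico_add_one_right_eq_Icc, Finset.prod_Ico_eq_prod_range]
    push_cast
    norm_num [add_comm, add_left_comm, add_assoc, mul_comm, mul_left_comm, mul_assoc]
  rw [show (n + (k:ℤ) + 2 : ℤ) = n + ((k+2:ℕ):ℤ) by push_cast; ring,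
    show (n + (k:ℤ) + 3 : ℤ) = n + ((k+3:ℕ):ℤ) by push_cast; ring,
    mul_assoc, e1, e2, e3]

private lemma tele {K : Type*} [Field K] (f : ℤ → K) (m : ℕ) (n : ℤ) :
    (∑ k ∈ Finset.range m, f (n + 1 + k)) + f n
      = (∑ k ∈ Finset.range m, f (n + k)) + f (n + m) := by
  induction m with
  | zero => simp
  | succ m ih =>
    rw [Finset.sum_range_succ, Finset.sum_range_succ,
      show (n + 1 + (m:ℤ)) = n + ((m+1:ℕ):ℤ) by push_cast; ring]
    linear_combination ih

private lemma star {K : Type*} [Field K] (M : ℕ) (α β : K)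
    (τ : ℤ → K) (hτ : ∀ n, τ n ≠ 0)
    (hm : ∀ n : ℤ,
      τ (n + M + 5) * (τ (n + M + 2)) ^ 2 * ∏ j ∈ Finset.range (M+1), τ (n + j + 1) =
        α * τ (n + 3) * τ (n + M + 2) * ∏ j ∈ Finset.range (M+2), τ (n + j + 2)
        - β * ∏ j ∈ Finset.range (M+4), τ (n + j + 1)
        - τ n * τ (n + 3) * ∏ j ∈ Finset.range (M+2), τ (n + j + 3)
        - ∑ k ∈ Finset.range (M+1), τ (n + k + 1) * τ (n + k + 4) *
            ∏ j ∈ ((Finset.Icc 1 (M+4)).erase (k + 2)).erase (k + 3), τ (n + j)) :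
    ∀ n : ℤ,
      τ (n + M + 2) * τ (n + M + 5) / (τ (n + M + 3) * τ (n + M + 4)) + β
        + τ n * τ (n + 3) / (τ (n + 1) * τ (n + 2))
        + ∑ k ∈ Finset.range (M+1),
            τ (n + k + 1) * τ (n + k + 4) / (τ (n + k + 2) * τ (n + k + 3))
      = α * τ (n + 3) * τ (n + M + 2) / (τ (n + 1) * τ (n + M + 4)) := by
  intro n
  set P := ∏ j ∈ Finset.range (M+4), τ (n + j + 1) with hP
  have hPne : P ≠ 0 := Finset.prod_ne_zero_iff.2 (fun j _ => hτ _)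
  have t1 : τ (n + M + 2) * τ (n + M + 5) / (τ (n + M + 3) * τ (n + M + 4)) * P
      = τ (n + M + 5) * (τ (n + M + 2)) ^ 2 * ∏ j ∈ Finset.range (M+1), τ (n + j + 1) := by
    rw [hP, ← prodA M τ n, div_mul_eq_mul_div, div_eq_iff (mul_ne_zero (hτ _) (hτ _))]
    ring
  have tR : α * τ (n + 3) * τ (n + M + 2) / (τ (n + 1) * τ (n + M + 4)) * P
      = α * τ (n + 3) * τ (n + M + 2) * ∏ j ∈ Finset.range (M+2), τ (n + j + 2) := by
    rw [hP, ← prodB M τ n, div_mul_eq_mul_div, div_eq_iff (mul_ne_zero (hτ _) (hτ _))]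
    ring
  have t3 : τ n * τ (n + 3) / (τ (n + 1) * τ (n + 2)) * P
      = τ n * τ (n + 3) * ∏ j ∈ Finset.range (M+2), τ (n + j + 3) := by
    rw [hP, ← prodC M τ n, div_mul_eq_mul_div, div_eq_iff (mul_ne_zero (hτ _) (hτ _))]
    ring
  have t4 : ∀ k ∈ Finset.range (M+1),
      τ (n + k + 1) * τ (n + k + 4) / (τ (n + k + 2) * τ (n + k + 3)) * P
        = τ (n + k + 1) * τ (n + k + 4) *
            ∏ j ∈ ((Finset.Icc 1 (M+4)).erase (k + 2)).erase (k + 3), τ (n + j) := by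
    intro k hk
    rw [Finset.mem_range] at hk
    rw [hP, ← prodD M τ n k hk, div_mul_eq_mul_div, div_eq_iff (mul_ne_zero (hτ _) (hτ _))]
    ring
  apply mul_right_cancel₀ hPne
  rw [add_mul, add_mul, add_mul, Finset.sum_mul, Finset.sum_congr rfl t4, t1, t3, tR]
  linear_combination hm n

/-- the quantity
`γ_n = (τ_{n+N+2}τ_n − α τ_{n+N}τ_{n+2})/(τ_{n+N+1}τ_{n+1})` is a 2-integral of the
multilinear (Laurentified DTKQ) equation. -/
theorem gamma_two_integral_of_multilinear {K : Type*} [Field K] (N : ℕ) (hN : 2 ≤ N)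
    (α β : K)
    (τ : ℤ → K) (hτ : ∀ n, τ n ≠ 0)
    (hmulti : ∀ n : ℤ,
      τ (n + N + 3) * (τ (n + N)) ^ 2 * ∏ j ∈ Finset.range (N - 1), τ (n + j + 1) =
        α * τ (n + 3) * τ (n + N) * ∏ j ∈ Finset.range N, τ (n + j + 2)
        - β * ∏ j ∈ Finset.range (N + 2), τ (n + j + 1)
        - τ n * τ (n + 3) * ∏ j ∈ Finset.range N, τ (n + j + 3)
        - ∑ k ∈ Finset.range (N - 1), τ (n + k + 1) * τ (n + k + 4) *
            ∏ j ∈ ((Finset.Icc 1 (N + 2)).erase (k + 2)).erase (k + 3), τ (n + j))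
    (γ : ℤ → K)
    (hγ : ∀ n : ℤ, γ n =
      (τ (n + N + 2) * τ n - α * (τ (n + N) * τ (n + 2))) /
        (τ (n + N + 1) * τ (n + 1))) :
    ∀ n : ℤ, γ (n + 2) = γ n := by
  obtain ⟨M, rfl⟩ : ∃ M, N = M + 2 := ⟨N - 2, by omega⟩
  have hm : ∀ n : ℤ,
      τ (n + M + 5) * (τ (n + M + 2)) ^ 2 * ∏ j ∈ Finset.range (M+1), τ (n + j + 1) =
        α * τ (n + 3) * τ (n + M + 2) * ∏ j ∈ Finset.range (M+2), τ (n + j + 2)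
        - β * ∏ j ∈ Finset.range (M+4), τ (n + j + 1)
        - τ n * τ (n + 3) * ∏ j ∈ Finset.range (M+2), τ (n + j + 3)
        - ∑ k ∈ Finset.range (M+1), τ (n + k + 1) * τ (n + k + 4) *
            ∏ j ∈ ((Finset.Icc 1 (M+4)).erase (k + 2)).erase (k + 3), τ (n + j) := by
    intro n
    have h := hmulti n
    simp only [show M+2-1 = M+1 by omega, show M+2+2 = M+4 by omega] at h
    push_cast at h ⊢
    norm_num [add_comm, add_left_comm, add_assoc, mul_comm, mul_left_comm, mul_assoc] at h ⊢
    linear_combination h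
  have hstar := star M α β τ hτ hm
  intro n
  have s1 := hstar (n + 1)
  have s2 := hstar n
  rw [show (n + 1 + (M:ℤ) + 2) = n + (M:ℤ) + 3 by ring,
    show (n + 1 + (M:ℤ) + 5) = n + (M:ℤ) + 6 by ring,
    show (n + 1 + (M:ℤ) + 3) = n + (M:ℤ) + 4 by ring,
    show (n + 1 + (M:ℤ) + 4) = n + (M:ℤ) + 5 by ring,
    show (n + 1 + 1 : ℤ) = n + 2 by ring,
    show (n + 1 + 2 : ℤ) = n + 3 by ring,
    show (n + 1 + 3 : ℤ) = n + 4 by ring] at s1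
  have T := tele (fun m => τ (m + 1) * τ (m + 4) / (τ (m + 2) * τ (m + 3))) (M+1) n
  rw [show (n + ((M+1:ℕ):ℤ) + 1) = n + (M:ℤ) + 2 by push_cast; ring,
    show (n + ((M+1:ℕ):ℤ) + 4) = n + (M:ℤ) + 5 by push_cast; ring,
    show (n + ((M+1:ℕ):ℤ) + 2) = n + (M:ℤ) + 3 by push_cast; ring,
    show (n + ((M+1:ℕ):ℤ) + 3) = n + (M:ℤ) + 4 by push_cast; ring] at T
  have E : τ (n + M + 3) * τ (n + M + 6) / (τ (n + M + 4) * τ (n + M + 5))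
        - τ n * τ (n + 3) / (τ (n + 1) * τ (n + 2))
      = α * τ (n + 4) * τ (n + M + 3) / (τ (n + 2) * τ (n + M + 5))
        - α * τ (n + 3) * τ (n + M + 2) / (τ (n + 1) * τ (n + M + 4)) := by
    linear_combination s1 - s2 - T
  field_simp [hτ] at E
  rw [hγ, hγ,
    show (n + 2 + ((M+2:ℕ):ℤ) + 2) = n + (M:ℤ) + 6 by push_cast; ring,
    show (n + 2 + ((M+2:ℕ):ℤ) + 1) = n + (M:ℤ) + 5 by push_cast; ring,
    show (n + 2 + ((M+2:ℕ):ℤ)) = n + (M:ℤ) + 4 by push_cast; ring,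
    show (n + 2 + 2 : ℤ) = n + 4 by ring,
    show (n + 2 + 1 : ℤ) = n + 3 by ring,
    show (n + ((M+2:ℕ):ℤ) + 2) = n + (M:ℤ) + 4 by push_cast; ring,
    show (n + ((M+2:ℕ):ℤ) + 1) = n + (M:ℤ) + 3 by push_cast; ring,
    show (n + ((M+2:ℕ):ℤ)) = n + (M:ℤ) + 2 by push_cast; ring,
    div_eq_div_iff (mul_ne_zero (hτ _) (hτ _)) (mul_ne_zero (hτ _) (hτ _))]
  apply mul_right_cancel₀ (b := τ (n+1) * τ (n+2) * (τ (n+(M:ℤ)+4) * τ (n+(M:ℤ)+5)))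
    (mul_ne_zero (mul_ne_zero (hτ _) (hτ _)) (mul_ne_zero (hτ _) (hτ _)))
  linear_combination (τ (n+1) * τ (n+2) * (τ (n+(M:ℤ)+4) * τ (n+(M:ℤ)+5))) * E
end

section
/- Let K be a field, N ≥ 2 an EVEN integer, and α, β ∈ K. Suppose u : ℤ → K satisfies u_n ≠ 0 for all n and satisfies the generalized DTKQ equation of order N with parameters α, β for all n ∈ ℤ. Then the sequence v_n := ∏_{j=0}^{(N−2)/2} u_{n+2j} = u_n·u_{n+2}·⋯·u_{n+N−2} satisfies the ordinary difference equation v_{n+N+1} − v_n = α·(1/v_{n+N} − 1/v_{n+1}) for all n ∈ ℤ, which is the (N,1) periodic travelling-wave reduction of Hirota's lattice KdV equation. -/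
private lemma dtkq_aux_step {K : Type*} [Field K] (α A E G1 V1 V3 a b c d : K)
    (hV1 : V1 ≠ 0) (hV3 : V3 ≠ 0) (hE : E ≠ 0) (hc : c ≠ 0)
    (h2 : V3 * d = V1 * b)
    (h3 : (b - a) * (V1 * (G1 * (E * c))) = α * (d - c)) :
    A * b * G1 - A * (a * G1) = α * (A * b / (V3 * (E * c)) - A / (V1 * E)) := by
  field_simp
  ring_nf
  linear_combination (A * V3) * h3 + (α * A) * h2


/-- for even `N`, `v_n = u_n u_{n+2} ⋯ u_{n+N-2}` built from a solution
of the generalized DTKQ equation satisfies the `(N,1)` periodic reduction of Hirota's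
lattice KdV equation, `v_{n+N+1} - v_n = α(1/v_{n+N} - 1/v_{n+1})`. -/
theorem dtkq_even_to_kdv_reduction {K : Type*} [Field K] (N : ℕ) (hN : 2 ≤ N)
    (hNeven : Even N) (α β : K)
    (u : ℤ → K) (hu : ∀ n, u n ≠ 0)
    (hDTKQ : ∀ n : ℤ,
      ((∑ j ∈ Finset.range (N + 1), u (n + j)) + β) *
        (∏ k ∈ Finset.range (N - 1), u (n + k + 1)) = α)
    (v : ℤ → K) (hv : ∀ n : ℤ, v n = ∏ j ∈ Finset.range (N / 2), u (n + 2 * j)) :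
    ∀ n : ℤ, v (n + N + 1) - v n = α * (1 / v (n + N) - 1 / v (n + 1)) := by
  obtain ⟨r, hr⟩ := hNeven
  set h : ℕ := N / 2 with hhdef
  have hNh : N = 2 * h := by omega
  have hh1 : 1 ≤ h := by omega
  have hNZ : (N : ℤ) = 2 * (h : ℤ) := by exact_mod_cast congrArg (Nat.cast : ℕ → ℤ) hNh
  have hv' : ∀ m : ℤ, v m = ∏ j ∈ Finset.range h, u (m + 2 * (j : ℤ)) := fun m => hv m
  have hvne : ∀ m : ℤ, v m ≠ 0 := by
    intro m
    rw [hv']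
    exact Finset.prod_ne_zero_iff.mpr fun j _ => hu _
  -- interleaving of even and odd products
  have hsplit : ∀ t : ℕ, ∀ m : ℤ,
      (∏ k ∈ Finset.range (2 * t), u (m + (k : ℤ)))
        = (∏ j ∈ Finset.range t, u (m + 2 * (j : ℤ)))
          * (∏ j ∈ Finset.range t, u (m + 2 * (j : ℤ) + 1)) := by
    intro t
    induction t with
    | zero => simp
    | succ s ih =>
      intro m
      rw [show 2 * (s + 1) = 2 * s + 1 + 1 from by ring, Finset.prod_range_succ,
        Finset.prod_range_succ, ih m, Finset.prod_range_succ, Finset.prod_range_succ]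
      rw [show m + ((2 * s + 1 : ℕ) : ℤ) = m + 2 * (s : ℤ) + 1 from by push_cast; ring,
        show m + ((2 * s : ℕ) : ℤ) = m + 2 * (s : ℤ) from by push_cast; ring]
      rw [mul_assoc]
      exact mul_mul_mul_comm _ _ _ _
  have hprodN : ∀ m : ℤ, (∏ k ∈ Finset.range N, u (m + (k : ℤ))) = v m * v (m + 1) := by
    intro m
    rw [hNh, hsplit h m, hv' m, hv' (m + 1)]
    congr 1
    exact Finset.prod_congr rfl fun j _ => by congr 1; push_cast; ring
  have hP1 : ∀ m : ℤ, u m * (∏ k ∈ Finset.range (N - 1), u (m + (k : ℤ) + 1))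
      = v m * v (m + 1) := by
    intro m
    have e : (∏ k ∈ Finset.range N, u (m + (k : ℤ)))
        = (∏ k ∈ Finset.range (N - 1), u (m + ((k + 1 : ℕ) : ℤ))) * u (m + ((0 : ℕ) : ℤ)) := by
      rw [show N = (N - 1) + 1 from by omega]
      exact Finset.prod_range_succ' (fun k => u (m + (k : ℤ))) (N - 1)
    rw [← hprodN m, e]
    rw [show (∏ k ∈ Finset.range (N - 1), u (m + ((k + 1 : ℕ) : ℤ)))
        = ∏ k ∈ Finset.range (N - 1), u (m + (k : ℤ) + 1) from
      Finset.prod_congr rfl fun k _ => by congr 1; push_cast; ring]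
    rw [show m + ((0 : ℕ) : ℤ) = m from by push_cast; ring]
    exact (mul_comm _ _)
  have hP2 : ∀ m : ℤ, (∏ k ∈ Finset.range (N - 1), u (m + (k : ℤ) + 1)) * u (m + (N : ℤ))
      = v (m + 1) * v (m + 2) := by
    intro m
    have e : (∏ k ∈ Finset.range N, u (m + 1 + (k : ℤ)))
        = (∏ k ∈ Finset.range (N - 1), u (m + 1 + (k : ℤ))) * u (m + 1 + ((N - 1 : ℕ) : ℤ)) := by
      rw [show N = (N - 1) + 1 from by omega]
      exact Finset.prod_range_succ (fun k => u (m + 1 + (k : ℤ))) (N - 1)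
    have hcast : ((N - 1 : ℕ) : ℤ) = (N : ℤ) - 1 := by omega
    have e2 : (∏ k ∈ Finset.range (N - 1), u (m + 1 + (k : ℤ)))
        = ∏ k ∈ Finset.range (N - 1), u (m + (k : ℤ) + 1) :=
      Finset.prod_congr rfl fun k _ => by congr 1; ring
    rw [hprodN (m + 1)] at e
    rw [hcast] at e
    rw [e2] at e
    rw [show m + 1 + ((N : ℤ) - 1) = m + (N : ℤ) from by ring] at e
    rw [show m + 1 + 1 = m + 2 from by ring] at e
    exact e.symm
  have hS : ∀ m : ℤ, (∑ j ∈ Finset.range (N + 1), u (m + 1 + (j : ℤ))) + u m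
      = (∑ j ∈ Finset.range (N + 1), u (m + (j : ℤ))) + u (m + (N : ℤ) + 1) := by
    intro m
    rw [Finset.sum_range_succ (fun j => u (m + 1 + (j : ℤ))) N,
      Finset.sum_range_succ' (fun j => u (m + (j : ℤ))) N]
    simp only [Nat.cast_zero, add_zero, Nat.cast_add, Nat.cast_one]
    rw [show (∑ j ∈ Finset.range N, u (m + ((j : ℤ) + 1)))
        = ∑ j ∈ Finset.range N, u (m + 1 + (j : ℤ)) from
      Finset.sum_congr rfl fun j _ => by congr 1; ring]
    rw [show m + 1 + (N : ℤ) = m + (N : ℤ) + 1 from by ring]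
    ring
  -- the key relation
  have hL3 : ∀ m : ℤ, (u (m + (N : ℤ) + 1) - u m) * (v (m + 1) * v (m + 2))
      = α * (u (m + 1) - u (m + (N : ℤ))) := by
    intro m
    have e1 := hDTKQ m
    have e2 := hDTKQ (m + 1)
    have q1 : ((∑ j ∈ Finset.range (N + 1), u (m + (j : ℤ))) + β) * (v (m + 1) * v (m + 2))
        = α * u (m + (N : ℤ)) := by
      rw [← hP2 m]; linear_combination u (m + (N : ℤ)) * e1
    have q2 : ((∑ j ∈ Finset.range (N + 1), u (m + 1 + (j : ℤ))) + β) * (v (m + 1) * v (m + 2))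
        = α * u (m + 1) := by
      rw [show (m + 2 : ℤ) = m + 1 + 1 from by ring, ← hP1 (m + 1)]
      linear_combination u (m + 1) * e2
    linear_combination q2 - q1 - (v (m + 1) * v (m + 2)) * hS m
  have hL2 : ∀ m : ℤ, v (m + 2) * u m = v m * u (m + (N : ℤ)) := by
    intro m
    have e1 : (∏ j ∈ Finset.range (h + 1), u (m + 2 * (j : ℤ)))
        = (∏ j ∈ Finset.range h, u (m + 2 * ((j + 1 : ℕ) : ℤ))) * u (m + 2 * ((0 : ℕ) : ℤ)) :=
      Finset.prod_range_succ' (fun j => u (m + 2 * (j : ℤ))) h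
    have e2 : (∏ j ∈ Finset.range (h + 1), u (m + 2 * (j : ℤ)))
        = (∏ j ∈ Finset.range h, u (m + 2 * (j : ℤ))) * u (m + 2 * (h : ℤ)) :=
      Finset.prod_range_succ (fun j => u (m + 2 * (j : ℤ))) h
    have e3 : (∏ j ∈ Finset.range h, u (m + 2 * ((j + 1 : ℕ) : ℤ)))
        = ∏ j ∈ Finset.range h, u (m + 2 + 2 * (j : ℤ)) :=
      Finset.prod_congr rfl fun j _ => by congr 1; push_cast; ring
    rw [hv' m, hv' (m + 2), ← e3]
    rw [show m + (N : ℤ) = m + 2 * (h : ℤ) from by rw [hNZ]]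
    simp only [Nat.cast_zero, mul_zero, add_zero] at e1
    rw [← e1]
    exact e2
  intro n
  -- telescoping structures
  set A : ℕ → K := fun i => ∏ j ∈ Finset.range i, u (n + (N : ℤ) + 1 + 2 * (j : ℤ)) with hA
  set E : ℕ → K := fun i => ∏ j ∈ Finset.range i, u (n + (N : ℤ) + 2 * (j : ℤ)) with hE
  set G : ℕ → K := fun i => ∏ j ∈ Finset.Ico i h, u (n + 2 * (j : ℤ)) with hG
  have hAne : ∀ i, A i ≠ 0 := fun i => Finset.prod_ne_zero_iff.mpr fun j _ => hu _
  have hEne : ∀ i, E i ≠ 0 := fun i => Finset.prod_ne_zero_iff.mpr fun j _ => hu _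
  have hV2 : ∀ i : ℕ, i < h → v (n + 2 * (i : ℤ) + 2) = G (i + 1) * E (i + 1) := by
    intro i hi
    rw [hv' (n + 2 * (i : ℤ) + 2)]
    have e0 : (∏ j ∈ Finset.range h, u (n + 2 * (i : ℤ) + 2 + 2 * (j : ℤ)))
        = ∏ j ∈ Finset.Ico (i + 1) (h + (i + 1)), u (n + 2 * (j : ℤ)) := by
      rw [Finset.prod_Ico_eq_prod_range]
      rw [show h + (i + 1) - (i + 1) = h from by omega]
      exact Finset.prod_congr rfl fun j _ => by congr 1; push_cast; ring
    rw [e0, ← Finset.prod_Ico_consecutive (fun j => u (n + 2 * (j : ℤ))) (by omega : i + 1 ≤ h)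
      (by omega : h ≤ h + (i + 1))]
    congr 1
    rw [Finset.prod_Ico_eq_prod_range]
    rw [show h + (i + 1) - h = i + 1 from by omega]
    exact Finset.prod_congr rfl fun j _ => by
      congr 1; rw [hNZ]; push_cast; ring
  have key : ∀ i : ℕ, i ≤ h → A i * G i - v n
      = α * (A i / (v (n + 2 * (i : ℤ) + 1) * E i) - 1 / v (n + 1)) := by
    intro i
    induction i with
    | zero =>
      intro _
      have hA0 : A 0 = 1 := by simp [hA]
      have hE0 : E 0 = 1 := by simp [hE]
      have hG0 : G 0 = v n := by
        simp only [hG]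
        rw [hv' n, Finset.range_eq_Ico]
      rw [hA0, hE0, hG0]
      norm_num
    | succ i ih =>
      intro hle
      have hi : i < h := by omega
      have IH := ih (by omega)
      -- step facts
      have fA : A (i + 1) = A i * u (n + (N : ℤ) + 1 + 2 * (i : ℤ)) := by
        rw [hA]
        exact Finset.prod_range_succ _ i
      have fE : E (i + 1) = E i * u (n + (N : ℤ) + 2 * (i : ℤ)) := by
        rw [hE]
        exact Finset.prod_range_succ _ i
      have fG : G i = u (n + 2 * (i : ℤ)) * G (i + 1) := by
        rw [hG]
        exact Finset.prod_eq_prod_Ico_succ_bot hi _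
      have hL2' := hL2 (n + 2 * (i : ℤ) + 1)
      have hL3' := hL3 (n + 2 * (i : ℤ))
      have hV2' := hV2 i hi
      have harg1 : ((i : ℤ) + 1) = ((i + 1 : ℕ) : ℤ) := by push_cast; ring
      have step : A (i + 1) * G (i + 1) - A i * G i
          = α * (A (i + 1) / (v (n + 2 * ((i + 1 : ℕ) : ℤ) + 1) * E (i + 1))
              - A i / (v (n + 2 * (i : ℤ) + 1) * E i)) := by
        rw [show n + 2 * (i : ℤ) + 1 + 2 = n + 2 * (i : ℤ) + 3 from by ring,
          show n + 2 * (i : ℤ) + 1 + (N : ℤ) = n + (N : ℤ) + 1 + 2 * (i : ℤ) from by ring]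
          at hL2'
        rw [show n + 2 * (i : ℤ) + (N : ℤ) + 1 = n + (N : ℤ) + 1 + 2 * (i : ℤ) from by ring,
          show n + 2 * (i : ℤ) + (N : ℤ) = n + (N : ℤ) + 2 * (i : ℤ) from by ring] at hL3'
        rw [hV2', fE] at hL3'
        have hL2'' : v (n + 2 * (i : ℤ) + 3) * u (n + 2 * (i : ℤ) + 1)
            = v (n + 2 * (i : ℤ) + 1) * u (n + (N : ℤ) + 1 + 2 * (i : ℤ)) := by
          linear_combination hL2'
        have hL3'' : (u (n + (N : ℤ) + 1 + 2 * (i : ℤ)) - u (n + 2 * (i : ℤ)))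
              * (v (n + 2 * (i : ℤ) + 1) * (G (i + 1) * (E i * u (n + (N : ℤ) + 2 * (i : ℤ)))))
            = α * (u (n + 2 * (i : ℤ) + 1) - u (n + (N : ℤ) + 2 * (i : ℤ))) := by
          linear_combination hL3'
        have halg := dtkq_aux_step α (A i) (E i) (G (i + 1)) (v (n + 2 * (i : ℤ) + 1))
          (v (n + 2 * (i : ℤ) + 3)) (u (n + 2 * (i : ℤ))) (u (n + (N : ℤ) + 1 + 2 * (i : ℤ)))
          (u (n + (N : ℤ) + 2 * (i : ℤ))) (u (n + 2 * (i : ℤ) + 1))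
          (hvne _) (hvne _) (hEne _) (hu _) hL2'' hL3''
        rw [fA, fE, fG,
          show n + 2 * ((i + 1 : ℕ) : ℤ) + 1 = n + 2 * (i : ℤ) + 3 from by push_cast; ring]
        linear_combination halg
      linear_combination IH + step
  have fin := key h le_rfl
  have hAh : A h = v (n + (N : ℤ) + 1) := by
    rw [hA, hv' (n + (N : ℤ) + 1)]
  have hEh : E h = v (n + (N : ℤ)) := by
    rw [hE, hv' (n + (N : ℤ))]
  have hGh : G h = 1 := by simp [hG]
  rw [hAh, hEh, hGh, show n + 2 * (h : ℤ) + 1 = n + (N : ℤ) + 1 from by rw [hNZ]] at fin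
  rw [mul_one] at fin
  rw [fin]
  congr 1
  congr 1
  rw [div_eq_div_iff (mul_ne_zero (hvne _) (hvne _)) (hvne _)]
  ring
end

section
/- Let K be a field, N ≥ 3 an ODD integer, and α ∈ K. Suppose u : ℤ → K satisfies u_n ≠ 0 for all n and satisfies the lifted DTKQ equation of order N+1 with parameter α for all n ∈ ℤ. Set s_n := u_n·u_{n+1}. Then the quantity K̄[u]_n := (∏_{j=0}^{N−1} s_{n+2j} − α²)·(s_{n+N−1})^{(N−1)/2}·∏_{k=1}^{(N−3)/2} (s_{n+2k}·s_{n+2N−2k−2})^{k} is independent of n, i.e. it is a first integral of the lifted DTKQ equation. -/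
section DTKQaux

variable {K : Type*} [Field K]

private def Uu (u : ℤ → K) (m : ℤ) (c : ℕ) : K := ∏ j ∈ Finset.range c, u (m + j)

private lemma Uu_succ_r (u : ℤ → K) (m : ℤ) (c : ℕ) :
    Uu u m (c+1) = Uu u m c * u (m + c) := Finset.prod_range_succ _ _

private lemma Uu_succ_l (u : ℤ → K) (m : ℤ) (c : ℕ) :
    Uu u m (c+1) = u m * Uu u (m+1) c := by
  rw [Uu, Finset.prod_range_succ', mul_comm]
  congr 1
  · simp
  · rw [Uu]; apply Finset.prod_congr rfl; intro j _; congr 1; push_cast; ring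

private lemma Uu_add (u : ℤ → K) (m : ℤ) (a b : ℕ) :
    Uu u m (a+b) = Uu u m a * Uu u (m+a) b := by
  rw [Uu, Finset.prod_range_add]
  congr 1
  apply Finset.prod_congr rfl; intro j _; congr 1; push_cast; ring

private lemma Uu_ne (u : ℤ → K) (hu : ∀ n, u n ≠ 0) (m : ℤ) (c : ℕ) : Uu u m c ≠ 0 :=
  Finset.prod_ne_zero_iff.mpr fun j _ => hu _

private lemma Uu_pair (u : ℤ → K) (m : ℤ) (c : ℕ) :
    Uu u m (2*c) = ∏ i ∈ Finset.range c, (u (m + 2*i) * u (m + 2*i + 1)) := by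
  induction c with
  | zero => simp [Uu]
  | succ c ih =>
    rw [show 2*(c+1) = (2*c) + 1 + 1 from by ring, Uu_succ_r, Uu_succ_r, ih,
      Finset.prod_range_succ]
    push_cast
    rw [mul_assoc, add_assoc m (2*(c:ℤ)) 1]

private lemma aux_nested (e : ℕ) : ∀ g : ℕ → K,
    ∏ k ∈ Finset.range (e+1), ∏ j ∈ Finset.range (2*(e-k)+1), g (k+1+j)
      = g (e+1) ^ (e+1) * ∏ k ∈ Finset.range e, (g (k+1) * g (2*e+1-k)) ^ (k+1) := by
  induction e with
  | zero => intro g; simp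
  | succ e ih =>
    intro g
    rw [Finset.prod_range_succ']
    have h0 : (∏ j ∈ Finset.range (2*(e+1-0)+1), g (0+1+j)) = ∏ j ∈ Finset.range (2*e+3), g (j+1) := by
      apply Finset.prod_congr (by congr 1)
      intro j _; congr 1; omega
    rw [h0]
    have h1 : (∏ k ∈ Finset.range (e+1), ∏ j ∈ Finset.range (2*(e+1-(k+1))+1), g (k+1+1+j))
        = ∏ k ∈ Finset.range (e+1), ∏ j ∈ Finset.range (2*(e-k)+1), (fun m => g (m+1)) (k+1+j) := by
      apply Finset.prod_congr rfl
      intro k hk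
      apply Finset.prod_congr (by congr 1 <;> omega)
      intro j _; congr 1; omega
    rw [h1, ih (fun m => g (m+1))]
    have q1 : (∏ k ∈ Finset.range e, ((fun m => g (m+1)) (k+1) * (fun m => g (m+1)) (2*e+1-k)) ^ (k+1))
        = (∏ k ∈ Finset.range e, g (k+1+1) ^ (k+1)) * ∏ k ∈ Finset.range e, g (2*e+1-k+1) ^ (k+1) := by
      rw [← Finset.prod_mul_distrib]
      apply Finset.prod_congr rfl; intro k _; rw [mul_pow]
    rw [q1]
    have p1 : (∏ k ∈ Finset.range (e+1), (g (k+1) * g (2*(e+1)+1-k)) ^ (k+1))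
        = ((∏ k ∈ Finset.range e, g (k+1+1) ^ (k+1)) * ∏ k ∈ Finset.range (e+1), g (k+1)) *
          ((∏ k ∈ Finset.range e, g (2*e+1-k+1) ^ (k+1)) * ∏ k ∈ Finset.range (e+1), g (2*e+3-k)) := by
      have e1 : ∀ k ∈ Finset.range (e+1), (g (k+1) * g (2*(e+1)+1-k)) ^ (k+1)
          = (g (k+1)^k * g (k+1)) * (g (2*e+3-k)^k * g (2*e+3-k)) := by
        intro k hk
        rw [show 2*(e+1)+1-k = 2*e+3-k from by omega, mul_pow, pow_succ, pow_succ]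
      rw [Finset.prod_congr rfl e1, Finset.prod_mul_distrib, Finset.prod_mul_distrib,
        Finset.prod_mul_distrib, Finset.prod_range_succ' (fun k => g (k+1) ^ k) e,
        Finset.prod_range_succ' (fun k => g (2*e+3-k) ^ k) e]
      simp only [pow_zero, mul_one]
      have e3 : (∏ k ∈ Finset.range e, g (2*e+3-(k+1)) ^ (k+1)) = ∏ k ∈ Finset.range e, g (2*e+1-k+1) ^ (k+1) := by
        apply Finset.prod_congr rfl
        intro k hk
        have hk' := Finset.mem_range.mp hk
        rw [show 2*e+3-(k+1) = 2*e+1-k+1 from by omega]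
      rw [e3]
    have t1 : (∏ j ∈ Finset.range (2*e+3), g (j+1))
        = (∏ j ∈ Finset.range (e+1), g (j+1)) * ((∏ j ∈ Finset.range (e+1), g (e+1+(j+1)+1)) * g (e+1+0+1)) := by
      rw [show 2*e+3 = (e+1)+(e+2) from by omega, Finset.prod_range_add,
        Finset.prod_range_succ' (fun x => g (e+1+x+1)) (e+1)]
    have t2 : (∏ k ∈ Finset.range (e+1), g (2*e+3-k)) = ∏ j ∈ Finset.range (e+1), g (e+1+(j+1)+1) := by
      rw [← Finset.prod_range_reflect]
      apply Finset.prod_congr rfl; intro k hk; congr 1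
      simp only [Finset.mem_range] at hk; omega
    rw [p1, t1, t2, show e+1+0+1 = e+1+1 from by omega]
    ring

end DTKQaux

/-- for odd `N`, with `s_n = u_n u_{n+1}`, the quantity
`K̄[u]_n = (∏_{j=0}^{N-1} s_{n+2j} − α²)·s_{n+N-1}^{(N-1)/2}·∏_{k=1}^{(N-3)/2}(s_{n+2k}s_{n+2N-2k-2})^k`
is a first integral of the lifted DTKQ equation. -/
theorem lifted_dtkq_odd_first_integral {K : Type*} [Field K] (N : ℕ) (hN : 3 ≤ N)
    (hNodd : Odd N) (α : K)
    (u : ℤ → K) (hu : ∀ n, u n ≠ 0)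
    (hlift : ∀ n : ℤ,
      u (n + N + 1) - u n +
        α * (1 / ∏ j ∈ Finset.range (N - 1), u (n + j + 1) -
          1 / ∏ j ∈ Finset.range (N - 1), u (n + j + 2)) = 0)
    (s : ℤ → K) (hs : ∀ n : ℤ, s n = u n * u (n + 1))
    (F : ℤ → K)
    (hF : ∀ n : ℤ, F n =
      ((∏ j ∈ Finset.range N, s (n + 2 * j)) - α ^ 2) *
        (s (n + N - 1)) ^ ((N - 1) / 2) *
        ∏ k ∈ Finset.range ((N - 3) / 2),
          (s (n + 2 * k + 2) * s (n + 2 * N - 2 * k - 4)) ^ (k + 1)) :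
    ∀ m n : ℤ, F m = F n := by
  obtain ⟨e, he⟩ : ∃ e : ℕ, N = 2*e+3 := by
    obtain ⟨t, ht⟩ := hNodd
    exact ⟨t-1, by omega⟩
  have hNz : (N:ℤ) = 2*(e:ℤ)+3 := by omega
  set R : ℤ → K := fun m => Uu u m N - α with hR
  set A : ℤ → K := fun m => ∏ i ∈ Finset.range (e+1), u (m + 2*i + 1) with hA
  set Gp : ℤ → K := fun m => ∏ k ∈ Finset.range (e+1), Uu u (m + 2*k + 2) (4*(e-k)+2) with hGp
  have hRdef : ∀ m : ℤ, R m = Uu u m N - α := fun m => rfl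
  have hAne : ∀ m : ℤ, A m ≠ 0 := fun m => Finset.prod_ne_zero_iff.mpr fun i _ => hu _
  have hUN : ∀ m : ℤ, Uu u m N = u m * Uu u (m+1) (N-1) := by
    intro m
    have h := Uu_succ_l u m (N-1)
    rw [show (N-1)+1 = N from by omega] at h
    exact h
  have hK1 : ∀ m : ℤ, Uu u (m+2) (N-1) * u (m+1) = Uu u (m+1) (N-1) * u (m + N) := by
    intro m
    have h1 : Uu u (m+1) ((N-1)+1) = u (m+1) * Uu u (m+1+1) (N-1) := Uu_succ_l u (m+1) (N-1)
    have h2 : Uu u (m+1) ((N-1)+1) = Uu u (m+1) (N-1) * u (m+1+((N-1:ℕ):ℤ)) := Uu_succ_r u (m+1) (N-1)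
    rw [show ((N-1:ℕ):ℤ) = (N:ℤ)-1 from by omega, show m+1+((N:ℤ)-1) = m + (N:ℤ) from by ring] at h2
    rw [show m+1+1 = m+2 from by ring] at h1
    linear_combination h2 - h1
  have star : ∀ n : ℤ, R (n+2) * u (n+1) = R n * u (n + N) := by
    intro n
    have hPa : (∏ j ∈ Finset.range (N-1), u (n + j + 1)) = Uu u (n+1) (N-1) := by
      rw [Uu]; apply Finset.prod_congr rfl; intro j _; congr 1; ring
    have hPb : (∏ j ∈ Finset.range (N-1), u (n + j + 2)) = Uu u (n+2) (N-1) := by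
      rw [Uu]; apply Finset.prod_congr rfl; intro j _; congr 1; ring
    have hE := hlift n
    rw [hPa, hPb] at hE
    have ha := Uu_ne u hu (n+1) (N-1)
    have hb := Uu_ne u hu (n+2) (N-1)
    have key : (u (n + N + 1) - u n) * (Uu u (n+1) (N-1) * Uu u (n+2) (N-1))
        = α * (Uu u (n+1) (N-1) - Uu u (n+2) (N-1)) := by
      field_simp at hE
      linear_combination hE
    have c1 := hK1 (n+1)
    have c2 := hK1 n
    rw [show n+1+2 = n+3 from by ring, show n+1+1 = n+2 from by ring,
      show n+1+(N:ℤ) = n+N+1 from by ring] at c1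
    apply mul_right_cancel₀ hb
    rw [hRdef (n+2), hRdef n, hUN (n+2), hUN n, show n+2+1 = n+3 from by ring]
    linear_combination (u (n+1) * Uu u (n+2) (N-1)) * c1 + (u (n+N+1) * Uu u (n+2) (N-1) - α) * c2
      + u (n+N) * key
  have chain : ∀ (m : ℤ) (k : ℕ),
      R (m + 2*k) * ∏ i ∈ Finset.range k, u (m + 2*i + 1)
        = R m * ∏ i ∈ Finset.range k, u (m + N + 2*i) := by
    intro m k
    induction k with
    | zero => simp
    | succ k ih =>
      rw [Finset.prod_range_succ, Finset.prod_range_succ]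
      push_cast
      rw [show m+2*((k:ℤ)+1) = m+2*(k:ℤ)+2 from by ring]
      have hst := star (m + 2*k)
      rw [show m+2*(k:ℤ)+(N:ℤ) = m+N+2*k from by ring] at hst
      linear_combination (∏ i ∈ Finset.range k, u (m + 2*i + 1)) * hst + u (m + N + 2*k) * ih
  have hApair : ∀ m : ℤ, A m * A (m+1) = Uu u (m+1) (2*(e+1)) := by
    intro m
    rw [Uu_pair u (m+1) (e+1), hA]
    simp only []
    rw [← Finset.prod_mul_distrib]
    apply Finset.prod_congr rfl; intro i _
    rw [show m+1+2*(i:ℤ) = m+2*i+1 from by ring]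
  have monKey : ∀ m : ℤ, Gp (m+1) * A (m+1) = Gp m * A (m + N) := by
    intro m
    have hL : Gp (m+1) * A (m+1)
        = ∏ k ∈ Finset.range (e+1), (u (m + 2*k + 2) * Uu u ((m + 2*k + 2) + 1) (4*(e-k)+2)) := by
      rw [hGp, hA]
      simp only []
      rw [← Finset.prod_mul_distrib]
      apply Finset.prod_congr rfl; intro k _
      rw [mul_comm, show m+1+2*(k:ℤ)+1 = m+2*k+2 from by ring,
        show m+1+2*(k:ℤ)+2 = (m+2*k+2)+1 from by ring]
    have hRt : Gp m * A (m + N)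
        = ∏ k ∈ Finset.range (e+1), (Uu u (m + 2*k + 2) (4*(e-k)+2) * u ((m + 2*k + 2) + ((4*(e-k)+2 : ℕ):ℤ))) := by
      rw [hGp, hA]
      simp only []
      have refl : (∏ i ∈ Finset.range (e+1), u (m + N + 2*i + 1))
          = ∏ k ∈ Finset.range (e+1), u ((m + 2*k + 2) + ((4*(e-k)+2 : ℕ):ℤ)) := by
        rw [← Finset.prod_range_reflect (fun i => u (m + N + 2*i + 1)) (e+1)]
        apply Finset.prod_congr rfl; intro k hk
        have hk' := Finset.mem_range.mp hk
        congr 1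
        omega
      rw [refl, ← Finset.prod_mul_distrib]
    rw [hL, hRt]
    apply Finset.prod_congr rfl; intro k _
    rw [← Uu_succ_l, ← Uu_succ_r]
  have CH : ∀ n : ℤ, R (n+N) * A (n+1) = R (n+1) * A (n+N) := by
    intro n
    have h := chain (n+1) (e+1)
    push_cast at h
    rw [show n+1+2*((e:ℤ)+1) = n+(N:ℤ) from by omega] at h
    have e1 : (∏ i ∈ Finset.range (e+1), u (n+1+2*i+1)) = A (n+1) := by
      rw [hA]
    have e2 : (∏ i ∈ Finset.range (e+1), u (n+1+N+2*i)) = A (n+N) := by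
      rw [hA]
      apply Finset.prod_congr rfl; intro i _
      rw [show n+1+(N:ℤ)+2*(i:ℤ) = n+N+2*i+1 from by ring]
    rw [e1, e2] at h
    exact h
  have CH2 : ∀ n : ℤ, R (n+N+1) * A n = R n * A (n+N+1) := by
    intro n
    have h := chain n (e+2)
    rw [show e+2 = (e+1)+1 from rfl] at h
    rw [Finset.prod_range_succ (fun i : ℕ => u (n + 2*(i:ℤ) + 1)) (e+1)] at h
    rw [Finset.prod_range_succ' (fun i : ℕ => u (n + (N:ℤ) + 2*(i:ℤ))) (e+1)] at h
    have a1 : n + 2*(((e+1)+1:ℕ):ℤ) = n + (N:ℤ) + 1 := by push_cast; omega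
    rw [a1] at h
    have a2 : n + 2*(((e+1):ℕ):ℤ) + 1 = n + (N:ℤ) := by push_cast; omega
    rw [a2] at h
    have a3 : n + (N:ℤ) + 2*((0:ℕ):ℤ) = n + (N:ℤ) := by push_cast; ring
    rw [a3] at h
    have e1 : (∏ i ∈ Finset.range (e+1), u (n+2*i+1)) = A n := by rw [hA]
    have e2 : (∏ i ∈ Finset.range (e+1), u (n+(N:ℤ)+2*((i+1:ℕ):ℤ))) = A (n+N+1) := by
      rw [hA]
      apply Finset.prod_congr rfl; intro i _
      congr 1
      push_cast; ring
    rw [e1] at h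
    rw [e2] at h
    apply mul_right_cancel₀ (hu (n+N))
    linear_combination h
  have key1 : ∀ n : ℤ, R (n+1) * Gp (n+1) = R (n+N) * Gp n := by
    intro n
    apply mul_right_cancel₀ (hAne (n+1))
    calc R (n+1) * Gp (n+1) * A (n+1) = R (n+1) * (Gp (n+1) * A (n+1)) := by ring
      _ = R (n+1) * (Gp n * A (n+N)) := by rw [monKey]
      _ = (R (n+1) * A (n+N)) * Gp n := by ring
      _ = (R (n+N) * A (n+1)) * Gp n := by rw [← CH n]
      _ = R (n+N) * Gp n * A (n+1) := by ring
  have Amono : ∀ n : ℤ, A (n+N+1) * A (n+N) * Uu u (n+1) N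
      = Uu u (n+N) N * (A n * A (n+1)) := by
    intro n
    rw [mul_comm (A (n+N+1)) (A (n+N)), hApair (n+N), hApair n]
    have h1 : Uu u (n+1) (N + 2*(e+1)) = Uu u (n+1) N * Uu u ((n+1)+(N:ℤ)) (2*(e+1)) := Uu_add u (n+1) N (2*(e+1))
    have h2 : Uu u (n+1) (2*(e+1) + N) = Uu u (n+1) (2*(e+1)) * Uu u ((n+1)+((2*(e+1):ℕ):ℤ)) N := Uu_add u (n+1) (2*(e+1)) N
    rw [show (n+1)+(N:ℤ) = n+N+1 from by ring] at h1
    rw [show (n+1)+((2*(e+1):ℕ):ℤ) = n+(N:ℤ) from by push_cast; omega] at h2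
    rw [show N + 2*(e+1) = 2*(e+1) + N from by omega] at h1
    linear_combination h2 - h1
  have key2 : ∀ n : ℤ, R (n+N+1) * Gp (n+1) * Uu u (n+1) N = R n * Gp n * Uu u (n+N) N := by
    intro n
    apply mul_right_cancel₀ (mul_ne_zero (hAne n) (hAne (n+1)))
    calc (R (n+N+1) * Gp (n+1) * Uu u (n+1) N) * (A n * A (n+1))
        = (R (n+N+1) * A n) * (Gp (n+1) * A (n+1)) * Uu u (n+1) N := by ring
      _ = (R n * A (n+N+1)) * (Gp n * A (n+N)) * Uu u (n+1) N := by rw [CH2 n, monKey n]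
      _ = R n * Gp n * (A (n+N+1) * A (n+N) * Uu u (n+1) N) := by ring
      _ = R n * Gp n * (Uu u (n+N) N * (A n * A (n+1))) := by rw [Amono n]
      _ = (R n * Gp n * Uu u (n+N) N) * (A n * A (n+1)) := by ring
  have hGs : ∀ n : ℤ, (s (n + N - 1)) ^ ((N-1)/2) *
      (∏ k ∈ Finset.range ((N-3)/2), (s (n + 2*k + 2) * s (n + 2*N - 2*k - 4)) ^ (k+1)) = Gp n := by
    intro n
    have h := aux_nested e (fun j => s (n + 2*j))
    have hq : Gp n = ∏ k ∈ Finset.range (e+1), ∏ j ∈ Finset.range (2*(e-k)+1), s (n + 2*((k+1+j : ℕ):ℤ)) := by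
      rw [hGp]
      simp only []
      apply Finset.prod_congr rfl; intro k hk
      have hk' := Finset.mem_range.mp hk
      rw [show 4*(e-k)+2 = 2*(2*(e-k)+1) from by ring, Uu_pair]
      apply Finset.prod_congr rfl; intro j _
      rw [hs (n + 2*((k+1+j : ℕ):ℤ))]
      congr 2 <;> push_cast <;> ring
    rw [hq]
    rw [show (∏ k ∈ Finset.range (e+1), ∏ j ∈ Finset.range (2*(e-k)+1), s (n + 2*((k+1+j : ℕ):ℤ)))
        = ∏ k ∈ Finset.range (e+1), ∏ j ∈ Finset.range (2*(e-k)+1), (fun j' : ℕ => s (n + 2*j')) (k+1+j) from rfl, h]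
    rw [show (N-1)/2 = e+1 from by omega, show (N-3)/2 = e from by omega]
    have harg : n + (N:ℤ) - 1 = n + 2*((e+1 : ℕ):ℤ) := by push_cast; omega
    rw [harg]
    congr 1
    apply Finset.prod_congr rfl; intro k hk
    have hk' := Finset.mem_range.mp hk
    congr 3
    · push_cast; ring
    · push_cast [show 2*e+1-k = 2*e+1-k from rfl]; omega
  have hPi : ∀ n : ℤ, (∏ j ∈ Finset.range N, s (n + 2*j)) = Uu u n N * Uu u (n+N) N := by
    intro n
    calc (∏ j ∈ Finset.range N, s (n + 2*j))
        = ∏ j ∈ Finset.range N, (u (n + 2*j) * u (n + 2*j + 1)) := Finset.prod_congr rfl (fun j _ => hs _)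
      _ = Uu u n (2*N) := (Uu_pair u n N).symm
      _ = Uu u n (N+N) := by rw [two_mul]
      _ = Uu u n N * Uu u (n+N) N := Uu_add u n N N
  have Fdec : ∀ n : ℤ, F n = Uu u n N * (R (n+N) * Gp n) + α * (R n * Gp n) := by
    intro n
    rw [hF n, mul_assoc, hGs n, hPi n, hRdef (n+N), hRdef n]
    ring
  have hstep : ∀ n : ℤ, F (n+1) = F n := by
    intro n
    rw [Fdec (n+1), Fdec n, show n+1+(N:ℤ) = n+N+1 from by ring, key1 n]
    have k2 := key2 n
    simp only [hRdef] at k2 ⊢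
    linear_combination k2
  have hconst : ∀ n : ℤ, F n = F 0 := by
    intro n
    induction n using Int.induction_on with
    | zero => rfl
    | succ k ih => rw [hstep k]; exact ih
    | pred k ih =>
      have h := hstep (-(k:ℤ)-1)
      rw [show (-(k:ℤ)-1+1) = -(k:ℤ) from by ring] at h
      rw [← h]; exact ih
  intro m n
  rw [hconst m, hconst n]
end

section
/- Let K be a field, P ≥ 2 an integer, and α ∈ K. Suppose T : ℤ → K satisfies T_n ≠ 0 for all n, and set v_n := T_n/T_{n+1}. (i) If v satisfies the reduced discrete Toda equation v_n/v_{n+P} − v_{n−P}/v_n + α²·(v_{n+P−1}/v_n − v_n/v_{n+1−P}) = 0 for all n ∈ ℤ, then there exists a constant K̄ ∈ K such that T satisfies the bilinear equation T_{n+2P}·T_n = α²·T_{n+2P−1}·T_{n+1} + K̄·(T_{n+P})² for all n ∈ ℤ. (ii) Conversely, if there exists K̄ ∈ K such that T satisfies T_{n+2P}·T_n = α²·T_{n+2P−1}·T_{n+1} + K̄·(T_{n+P})² for all n ∈ ℤ, then v satisfies the reduced discrete Toda equation for all n ∈ ℤ. -/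
/-- with `v_n = T_n/T_{n+1}`, the reduced discrete Toda equation for `v`
is equivalent to the bilinear equation
`T_{n+2P} T_n = α² T_{n+2P-1} T_{n+1} + K̄ (T_{n+P})²` for some constant `K̄`. -/
theorem toda_reduction_bilinear_equiv {K : Type*} [Field K] (P : ℕ) (hP : 2 ≤ P) (α : K)
    (T : ℤ → K) (hT : ∀ n, T n ≠ 0)
    (v : ℤ → K) (hv : ∀ n : ℤ, v n = T n / T (n + 1)) :
    ((∀ n : ℤ, v n / v (n + P) - v (n - P) / v n +
        α ^ 2 * (v (n + P - 1) / v n - v n / v (n + 1 - P)) = 0) →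
      ∃ Kbar : K, ∀ n : ℤ,
        T (n + 2 * P) * T n = α ^ 2 * (T (n + 2 * P - 1) * T (n + 1)) +
          Kbar * (T (n + P)) ^ 2) ∧
    (∀ Kbar : K, (∀ n : ℤ,
        T (n + 2 * P) * T n = α ^ 2 * (T (n + 2 * P - 1) * T (n + 1)) +
          Kbar * (T (n + P)) ^ 2) →
      ∀ n : ℤ, v n / v (n + P) - v (n - P) / v n +
        α ^ 2 * (v (n + P - 1) / v n - v n / v (n + 1 - P)) = 0) := by
  have key : ∀ n : ℤ, (v n / v (n + P) - v (n - P) / v n +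
      α ^ 2 * (v (n + P - 1) / v n - v n / v (n + 1 - P)) = 0) ↔
      (T (n + P + 1) * T (n + 1 - P) - α ^ 2 * (T (n + P) * T (n + 2 - P))) * (T n) ^ 2 =
      (T (n - P) * T (n + P) - α ^ 2 * (T (n + P - 1) * T (n + 1 - P))) * (T (n + 1)) ^ 2 := by
    intro n
    rw [hv n, hv (n + P), hv (n - P), hv (n + P - 1), hv (n + 1 - P)]
    have e2 : n - (P:ℤ) + 1 = n + 1 - P := by ring
    have e3 : n + (P:ℤ) - 1 + 1 = n + P := by ring
    have e4 : n + 1 - (P:ℤ) + 1 = n + 2 - P := by ring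
    rw [e2, e3, e4]
    have hC : T n * T (n + 1) * T (n + P) * T (n + 1 - P) ≠ 0 := by simp [hT]
    have hexpr : T n / T (n + 1) / (T (n + P) / T (n + P + 1)) -
        T (n - P) / T (n + 1 - P) / (T n / T (n + 1)) +
        α ^ 2 * (T (n + P - 1) / T (n + P) / (T n / T (n + 1)) -
          T n / T (n + 1) / (T (n + 1 - P) / T (n + 2 - P))) =
        ((T (n + P + 1) * T (n + 1 - P) - α ^ 2 * (T (n + P) * T (n + 2 - P))) * (T n) ^ 2 -
         (T (n - P) * T (n + P) - α ^ 2 * (T (n + P - 1) * T (n + 1 - P))) * (T (n + 1)) ^ 2) /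
        (T n * T (n + 1) * T (n + P) * T (n + 1 - P)) := by
      field_simp [hT]
      ring
    rw [hexpr, div_eq_zero_iff, or_iff_left hC, sub_eq_zero]
  constructor
  · intro h
    set f : ℤ → K := fun m =>
      (T (m + 2 * P) * T m - α ^ 2 * (T (m + 2 * P - 1) * T (m + 1))) / T (m + P) ^ 2 with hf
    have hstep : ∀ m : ℤ, f (m + 1) = f m := by
      intro m
      have hk := (key (m + P)).mp (h (m + P))
      have a1 : m + (P:ℤ) + P + 1 = m + 1 + 2 * P := by ring
      have a2 : m + (P:ℤ) + 1 - P = m + 1 := by ring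
      have a3 : m + (P:ℤ) + P = m + 1 + 2 * P - 1 := by ring
      have a4 : m + (P:ℤ) + 2 - P = m + 1 + 1 := by ring
      have a5 : m + (P:ℤ) - P = m := by ring
      have a6 : m + (P:ℤ) + P - 1 + 0 = m + 2 * P - 1 := by ring
      have a7 : m + (P:ℤ) + 1 = m + 1 + P := by ring
      rw [a1, a2, a4, a5] at hk
      rw [show m + (P:ℤ) + P - 1 = m + 2 * P - 1 from by ring,
          show m + (P:ℤ) + P = m + 2 * P from by ring] at hk
      simp only [hf]
      rw [div_eq_div_iff (pow_ne_zero _ (hT _)) (pow_ne_zero _ (hT _))]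
      rw [show m + 1 + 2 * (P:ℤ) - 1 = m + 2 * P from by ring,
          show m + 1 + (P:ℤ) = m + P + 1 from by ring]
      linear_combination hk
    have hconst : ∀ m : ℤ, f m = f 0 := by
      intro m
      induction m using Int.induction_on with
      | zero => rfl
      | succ k ih => rw [hstep k, ih]
      | pred k ih => rw [← ih, ← hstep (-(k:ℤ) - 1)]; norm_num
    refine ⟨f 0, fun n => ?_⟩
    have hn := hconst n
    simp only [hf] at hn
    rw [div_eq_iff (pow_ne_zero _ (hT _))] at hn
    linear_combination hn
  · intro Kbar hb n
    rw [key n]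
    have g1 := hb (n + 1 - P)
    have g2 := hb (n - P)
    rw [show n + 1 - (P:ℤ) + 2 * P - 1 = n + P from by ring,
        show n + 1 - (P:ℤ) + 2 * P = n + P + 1 from by ring,
        show n + 1 - (P:ℤ) + 1 = n + 2 - P from by ring,
        show n + 1 - (P:ℤ) + P = n + 1 from by ring] at g1
    rw [show n - (P:ℤ) + 2 * P - 1 = n + P - 1 from by ring,
        show n - (P:ℤ) + 2 * P = n + P from by ring,
        show n - (P:ℤ) + 1 = n + 1 - P from by ring,
        show n - (P:ℤ) + P = n from by ring] at g2
    linear_combination (T n) ^ 2 * g1 - (T (n + 1)) ^ 2 * g2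
end

section
/- Let K be an infinite field and α ∈ K with α ≠ 0. For p, v, u, η ∈ K with v ≠ 0, define the 2×2 matrices L(p, v, η) := [[p + η, v], [−v⁻¹, 0]] and M(u, v, η) := [[1 − α²·u·v⁻¹ − α·η, −α·u], [α·v⁻¹, 1]]. Let V : ℤ×ℤ → K with V_{k,l} ≠ 0 for all k, l, and let Π : ℤ×ℤ → K. Then the discrete zero-curvature equation L(Π_{k,l}, V_{k,l}, η)·M(V_{k+1,l}, V_{k,l+1}, η) = M(V_{k+1,l−1}, V_{k,l}, η)·L(Π_{k+1,l}, V_{k+1,l}, η) holds for all k, l ∈ ℤ and all η ∈ K if and only if both of the following hold for all k, l ∈ ℤ: Π_{k+1,l} = α·V_{k+1,l}/V_{k,l+1} + α⁻¹·(V_{k,l}/V_{k+1,l} − 1), and V satisfies the discrete Toda equation V_{k,l}/V_{k+1,l} − V_{k−1,l}/V_{k,l} + α²·(V_{k+1,l−1}/V_{k,l} − V_{k,l}/V_{k−1,l+1}) = 0. -/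
/-- The Lax matrix `L(p, v, η)` of the discrete Toda lattice. -/
def laxL {K : Type*} [Field K] (p v η : K) : Matrix (Fin 2) (Fin 2) K :=
  !![p + η, v; -v⁻¹, 0]

/-- The Lax matrix `M(u, v, η)` (depending on the parameter `α`) of the discrete
Toda lattice. -/
def laxM {K : Type*} [Field K] (α u v η : K) : Matrix (Fin 2) (Fin 2) K :=
  !![1 - α ^ 2 * u * v⁻¹ - α * η, -α * u; α * v⁻¹, 1]

set_option maxHeartbeats 1000000 in
/-- Auxiliary identity: given the explicit formulas for the `Π` variables, the
zero-curvature equation holds identically. -/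
lemma lax_key_aux {K : Type*} [Field K] (α a b c d η : K) (hα : α ≠ 0)
    (ha : a ≠ 0) (hb : b ≠ 0) (hc : c ≠ 0) :
    laxL (α * d / a + α⁻¹ * (a / b - 1)) a η * laxM α b c η =
      laxM α d a η * laxL (α * b / c + α⁻¹ * (a / b - 1)) b η := by
  ext i j
  fin_cases i <;> fin_cases j
  · simp [laxL, laxM, Matrix.mul_apply, Fin.sum_univ_two]
    field_simp
    ring
  · simp [laxL, laxM, Matrix.mul_apply, Fin.sum_univ_two]
    field_simp
    ring
  · simp [laxL, laxM, Matrix.mul_apply, Fin.sum_univ_two]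
    field_simp
    ring
  · simp [laxL, laxM, Matrix.mul_apply, Fin.sum_univ_two]
    ring

set_option maxHeartbeats 1000000 in
/-- the discrete zero-curvature equation
`L(Π_{k,l}, V_{k,l}, η) M(V_{k+1,l}, V_{k,l+1}, η) = M(V_{k+1,l-1}, V_{k,l}, η) L(Π_{k+1,l}, V_{k+1,l}, η)`
(for all `k`, `l`, `η`) is equivalent to the formula for `Π_{k+1,l}` together with the
discrete time Toda lattice equation for `V`. -/
theorem toda_zero_curvature_equiv {K : Type*} [Field K] [Infinite K]
    (α : K) (hα : α ≠ 0)
    (V : ℤ → ℤ → K) (hV : ∀ k l, V k l ≠ 0)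
    (Q : ℤ → ℤ → K) :
    (∀ (k l : ℤ) (η : K),
      laxL (Q k l) (V k l) η * laxM α (V (k + 1) l) (V k (l + 1)) η =
        laxM α (V (k + 1) (l - 1)) (V k l) η * laxL (Q (k + 1) l) (V (k + 1) l) η) ↔
    ((∀ k l : ℤ, Q (k + 1) l =
        α * V (k + 1) l / V k (l + 1) + α⁻¹ * (V k l / V (k + 1) l - 1)) ∧
     (∀ k l : ℤ, V k l / V (k + 1) l - V (k - 1) l / V k l +
        α ^ 2 * (V (k + 1) (l - 1) / V k l - V k l / V (k - 1) (l + 1)) = 0)) := by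
  constructor
  · intro h
    have hB : ∀ k l : ℤ, Q (k + 1) l =
        α * V (k + 1) l / V k (l + 1) + α⁻¹ * (V k l / V (k + 1) l - 1) := by
      intro k l
      have h10 := congrFun (congrFun (h k l 0) 1) 0
      simp [laxL, laxM, Matrix.mul_apply, Fin.sum_univ_two] at h10
      field_simp [hα, hV] at h10 ⊢
      apply mul_left_cancel₀ (hV k l)
      linear_combination (-(V k l)) * h10
    refine ⟨hB, fun k l => ?_⟩
    have h01 := congrFun (congrFun (h k l 0) 0) 1
    simp [laxL, laxM, Matrix.mul_apply, Fin.sum_univ_two] at h01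
    have hB' := hB (k - 1) l
    simp only [sub_add_cancel] at hB'
    rw [hB'] at h01
    field_simp [hα, hV] at h01 ⊢
    apply mul_left_cancel₀ hα
    linear_combination α * h01
  · rintro ⟨hB, hT⟩ k l η
    have hA : Q k l = α * V (k + 1) (l - 1) / V k l + α⁻¹ * (V k l / V (k + 1) l - 1) := by
      have hB' := hB (k - 1) l
      simp only [sub_add_cancel] at hB'
      rw [hB']
      have hT' := hT k l
      field_simp [hα, hV] at hT' ⊢
      linear_combination -hT'
    rw [hA, hB k l]
    exact lax_key_aux α (V k l) (V (k + 1) l) (V k (l + 1)) (V (k + 1) (l - 1)) η hα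
      (hV k l) (hV (k + 1) l) (hV k (l + 1))
end

section
/- Let K be a field, P ≥ 2 an integer, and α ∈ K with α ≠ 0. Suppose v : ℤ → K satisfies v_n ≠ 0 for all n and satisfies the reduced discrete Toda equation v_n/v_{n+P} − v_{n−P}/v_n + α²·(v_{n+P−1}/v_n − v_n/v_{n+1−P}) = 0 for all n ∈ ℤ. Define p_n := α·v_n/v_{n−P+1} + α⁻¹·(v_{n−P}/v_n − 1), and for η ∈ K set L_n(η) := L(p_n, v_n, η) and M_n(η) := M(v_n, v_{n−P+1}, η), where L(p, v, η) = [[p + η, v], [−v⁻¹, 0]] and M(u, v, η) = [[1 − α²·u·v⁻¹ − α·η, −α·u], [α·v⁻¹, 1]]. Then: (i) L_n(η)·M_{n+P}(η) = M_{n+P−1}(η)·L_{n+P}(η) for all n ∈ ℤ and η ∈ K; and (ii) for every η ∈ K with α·η ≠ 1, the monodromy matrix 𝓜_n(η) := (1 − α·η)·M_n(η)⁻¹·L_{n−P+1}(η)·L_{n−P+2}(η)·⋯·L_{n−1}(η)·L_n(η) satisfies the discrete Lax equation 𝓜_n(η)·L_{n+1}(η) = L_{n+1}(η)·𝓜_{n+1}(η)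 for all n ∈ ℤ. -/
lemma lax_key {K : Type*} [Field K] (α a b c d e f η : K) (hα : α ≠ 0)
    (ha : a ≠ 0) (hb : b ≠ 0) (hc : c ≠ 0) (hf : f ≠ 0)
    (hT : d * (b * c) = a ^ 2 * c + α ^ 2 * (e * c - a ^ 2) * b) :
    laxL (α*a/c + α⁻¹*(d/a-1)) a η * laxM α b f η
      = laxM α e a η * laxL (α*b/f + α⁻¹*(a/b-1)) b η := by
  have hd : d = a^2/b + α^2*(e - a^2/c) := by
    have hcomb : a^2/b + α^2*(e - a^2/c) = (a^2*c + α^2*(e*c - a^2)*b)/(b*c) := by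
      field_simp
    rw [hcomb, eq_div_iff (mul_ne_zero hb hc)]
    linear_combination hT
  subst hd
  unfold laxL laxM
  ext i j
  fin_cases i <;> fin_cases j <;>
    simp [Matrix.mul_apply, Fin.sum_univ_two] <;> field_simp
  · ring
  · ring
  · ring


lemma flatMap_cast_eq_map (l : List ℕ) :
    (l.flatMap fun a => [(a : ℤ)]) = l.map (fun a : ℕ => (a : ℤ)) := by
  induction l with
  | nil => rfl
  | cons x xs ih => simp_all

/-- for a solution of the `(1,-P)` reduction of the discrete Toda
equation, the reduced Lax matrices satisfy `L_n M_{n+P} = M_{n+P-1} L_{n+P}`, and the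
monodromy matrix `𝓜_n(η) = (1-αη) M_n(η)⁻¹ L_{n-P+1}(η) ⋯ L_n(η)` satisfies the
discrete Lax equation `𝓜_n L_{n+1} = L_{n+1} 𝓜_{n+1}`. -/
theorem toda_reduction_lax_equation {K : Type*} [Field K] (P : ℕ) (hP : 2 ≤ P)
    (α : K) (hα : α ≠ 0)
    (v : ℤ → K) (hv : ∀ n, v n ≠ 0)
    (htoda : ∀ n : ℤ, v n / v (n + P) - v (n - P) / v n +
      α ^ 2 * (v (n + P - 1) / v n - v n / v (n + 1 - P)) = 0)
    (p : ℤ → K)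
    (hp : ∀ n : ℤ, p n = α * v n / v (n - P + 1) + α⁻¹ * (v (n - P) / v n - 1))
    (Lm : ℤ → K → Matrix (Fin 2) (Fin 2) K)
    (hL : ∀ (n : ℤ) (η : K), Lm n η = laxL (p n) (v n) η)
    (Mm : ℤ → K → Matrix (Fin 2) (Fin 2) K)
    (hM : ∀ (n : ℤ) (η : K), Mm n η = laxM α (v n) (v (n - P + 1)) η)
    (Mon : ℤ → K → Matrix (Fin 2) (Fin 2) K)
    (hMon : ∀ (n : ℤ) (η : K), Mon n η =
      (1 - α * η) • ((Mm n η)⁻¹ *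
        ((List.range P).map (fun j => Lm (n - P + 1 + j) η)).prod)) :
    (∀ (n : ℤ) (η : K), Lm n η * Mm (n + P) η = Mm (n + P - 1) η * Lm (n + P) η) ∧
    (∀ η : K, α * η ≠ 1 → ∀ n : ℤ,
      Mon n η * Lm (n + 1) η = Lm (n + 1) η * Mon (n + 1) η) := by
  have part1 : ∀ (n : ℤ) (η : K),
      Lm n η * Mm (n + P) η = Mm (n + P - 1) η * Lm (n + P) η := by
    intro n η
    have hd : v (n - P) * (v (n + P) * v (n - P + 1)) = (v n) ^ 2 * v (n - P + 1)
        + α ^ 2 * (v (n + P - 1) * v (n - P + 1) - (v n) ^ 2) * v (n + P) := by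
      have T := htoda n
      rw [show n + 1 - (P:ℤ) = n - P + 1 by ring] at T
      have h1 := hv n; have h2 := hv (n + P); have h3 := hv (n - P + 1)
      field_simp at T
      apply mul_left_cancel₀ h1
      linear_combination -(v n) * T
    rw [hL, hL, hM, hM, hp, hp,
      show n + (P:ℤ) - P + 1 = n + 1 by ring,
      show n + (P:ℤ) - P = n by ring,
      show n + (P:ℤ) - 1 - P + 1 = n by ring]
    exact lax_key α (v n) (v (n + P)) (v (n - P + 1)) (v (n - P)) (v (n + P - 1))
      (v (n + 1)) η hα (hv _) (hv _) (hv _) (hv _) hd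
  have hMon' : ∀ (m : ℤ) (η : K), Mon m η =
      (1 - α * η) • ((Mm m η)⁻¹ *
        ((List.range P).map (fun j : ℕ => Lm (m - P + 1 + j) η)).prod) := by
    intro m η
    rw [hMon]
    congr 2
    simp only [List.pure_def, List.bind_eq_flatMap, flatMap_cast_eq_map, List.map_map]
    induction (List.range P) with
    | nil => rfl
    | cons x xs ih =>
      simp only [List.flatMap_cons, List.map_append, List.prod_append, ih, List.map_cons,
        List.map_nil, List.prod_cons, List.prod_nil, mul_one]
  refine ⟨part1, ?_⟩
  intro η hη n
  have hdetne : (1 : K) - α * η ≠ 0 := sub_ne_zero.mpr (Ne.symm hη)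
  have hdet : ∀ m : ℤ, (Mm m η).det = 1 - α * η := by
    intro m
    rw [hM]
    unfold laxM
    rw [Matrix.det_fin_two_of]
    ring
  have hunit : ∀ m : ℤ, IsUnit (Mm m η).det := by
    intro m; rw [hdet m]; exact Ne.isUnit hdetne
  -- the intertwining relation
  have comm : Lm (n + 1 - P) η * Mm (n + 1) η = Mm n η * Lm (n + 1) η := by
    have h := part1 (n + 1 - P) η
    rw [show n + 1 - (P:ℤ) + P = n + 1 by ring] at h
    rw [show n + 1 - (1:ℤ) = n by ring] at h
    exact h
  have swap : (Mm n η)⁻¹ * Lm (n + 1 - P) η = Lm (n + 1) η * (Mm (n + 1) η)⁻¹ := by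
    calc (Mm n η)⁻¹ * Lm (n + 1 - P) η
        = (Mm n η)⁻¹ * (Lm (n + 1 - P) η * Mm (n + 1) η) * (Mm (n + 1) η)⁻¹ := by
          rw [mul_assoc, mul_assoc,
            Matrix.mul_nonsing_inv _ (hunit (n + 1)), Matrix.mul_one]
      _ = Lm (n + 1) η * (Mm (n + 1) η)⁻¹ := by
          rw [comm, ← mul_assoc,
            Matrix.nonsing_inv_mul _ (hunit n), Matrix.one_mul]
  -- product identities
  have prodshift :
      ((List.range P).map (fun j : ℕ => Lm (n - P + 1 + j) η)).prod * Lm (n + 1) η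
        = Lm (n + 1 - P) η *
          ((List.range P).map (fun j : ℕ => Lm (n + 1 - P + 1 + j) η)).prod := by
    have h1 : ((List.range (P + 1)).map (fun j : ℕ => Lm (n - P + 1 + j) η)).prod
        = ((List.range P).map (fun j : ℕ => Lm (n - P + 1 + j) η)).prod * Lm (n + 1) η := by
      rw [List.range_succ, List.map_append, List.prod_append, List.map_singleton,
        List.prod_singleton, show n - (P:ℤ) + 1 + P = n + 1 by ring]
    have h2 : ((List.range (P + 1)).map (fun j : ℕ => Lm (n - P + 1 + j) η)).prod
        = Lm (n + 1 - P) η *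
          ((List.range P).map (fun j : ℕ => Lm (n + 1 - P + 1 + j) η)).prod := by
      have hfun : ((fun j : ℕ => Lm (n - P + 1 + j) η) ∘ Nat.succ)
          = (fun j : ℕ => Lm (n + 1 - P + 1 + j) η) := by
        funext j
        simp only [Function.comp_apply]
        congr 1
        push_cast; ring
      rw [List.range_succ_eq_map, List.map_cons, List.prod_cons, List.map_map, hfun]
      congr 2
      push_cast
      ring
    rw [← h1, h2]
  calc Mon n η * Lm (n + 1) η
      = (1 - α * η) • ((Mm n η)⁻¹ *
          (((List.range P).map (fun j : ℕ => Lm (n - P + 1 + j) η)).prod * Lm (n + 1) η)) := by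
        rw [hMon', Matrix.smul_mul, mul_assoc]
    _ = (1 - α * η) • (((Mm n η)⁻¹ * Lm (n + 1 - P) η) *
          ((List.range P).map (fun j : ℕ => Lm (n + 1 - P + 1 + j) η)).prod) := by
        rw [prodshift, mul_assoc]
    _ = Lm (n + 1) η * Mon (n + 1) η := by
        rw [swap, hMon', Matrix.mul_smul, mul_assoc]
end

section
/- Let K be a field, N ≥ 2 an EVEN integer, and α ∈ K. Suppose w : ℤ → K with w_n ≠ 0 for all n, and γ : ℤ → K with γ_{n+2} = γ_n for all n, satisfy the U-system w_{n+N}·w_n·∏_{j=1}^{N−1} (w_{n+j})² = γ_n·∏_{j=1}^{N−1} w_{n+j} + α for all n ∈ ℤ. Then the sequence u_n := w_n·w_{n+1} satisfies the lifted DTKQ equation of order N+1 with parameter α for all n ∈ ℤ. (This expresses the commutativity φ ∘ π₁ = π₁ ∘ ψ of the upper square in the diagram of Theorem: the map π₁ sends orbits of the U-system map ψ to orbits of the lifted DTKQ map φ.) -/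
private def PP {K : Type*} [CommMonoid K] (w : ℤ → K) (m : ℕ) (k : ℤ) : K :=
  ∏ j ∈ Finset.range m, w (k + j + 1)

private lemma PP_def {K : Type*} [CommMonoid K] (w : ℤ → K) (m : ℕ) (k : ℤ) :
    PP w m k = ∏ j ∈ Finset.range m, w (k + j + 1) := rfl

private lemma PP_shift {K : Type*} [CommMonoid K] (w : ℤ → K) (m : ℕ) (k : ℤ) :
    w (k + 1) * PP w m (k + 1) = PP w m k * w (k + m + 1) := by
  have h1 : PP w (m + 1) k = w (k + 1) * PP w m (k + 1) := by
    have hterm : ∀ j ∈ Finset.range m, w (k + ((j : ℕ) + 1 : ℕ) + 1) = w (k + 1 + j + 1) := by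
      intro j _; congr 1; push_cast; ring
    rw [PP_def, Finset.prod_range_succ', Finset.prod_congr rfl hterm, mul_comm]
    congr 1
    norm_num
  have h2 : PP w (m + 1) k = PP w m k * w (k + m + 1) := by
    unfold PP
    rw [Finset.prod_range_succ]
  rw [← h1, h2]

private lemma PP_ne_zero {K : Type*} [Field K] (w : ℤ → K) (hw : ∀ n, w n ≠ 0)
    (m : ℕ) (k : ℤ) : PP w m k ≠ 0 := by
  unfold PP
  exact Finset.prod_ne_zero_iff.mpr fun j _ => hw _

/-- for even `N`, if `w` and 2-periodic `γ` satisfy the U-system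
`w_{n+N} w_n ∏_{j=1}^{N-1} w_{n+j}² = γ_n ∏_{j=1}^{N-1} w_{n+j} + α`, then
`u_n = w_n w_{n+1}` satisfies the lifted DTKQ equation of order `N+1`. -/
theorem usystem_even_to_lifted_dtkq {K : Type*} [Field K] (N : ℕ) (hN : 2 ≤ N)
    (hNeven : Even N) (α : K)
    (w : ℤ → K) (hw : ∀ n, w n ≠ 0)
    (γ : ℤ → K) (hper : ∀ n : ℤ, γ (n + 2) = γ n)
    (hUsys : ∀ n : ℤ,
      w (n + N) * w n * ∏ j ∈ Finset.range (N - 1), (w (n + j + 1)) ^ 2 =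
        γ n * ∏ j ∈ Finset.range (N - 1), w (n + j + 1) + α)
    (u : ℤ → K) (hu : ∀ n : ℤ, u n = w n * w (n + 1)) :
    ∀ n : ℤ,
      u (n + N + 1) - u n +
        α * (1 / ∏ j ∈ Finset.range (N - 1), u (n + j + 1) -
          1 / ∏ j ∈ Finset.range (N - 1), u (n + j + 2)) = 0 := by
  intro n
  set m := N - 1 with hmdef
  have hmz : (m : ℤ) = (N : ℤ) - 1 := by omega
  have hune : ∀ k : ℤ, u k ≠ 0 := fun k => by
    rw [hu]; exact mul_ne_zero (hw _) (hw _)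
  -- product of u's splits as product of two shifted products of w's
  have hQ : ∀ k : ℤ, PP u m k = PP w m k * PP w m (k + 1) := by
    intro k
    rw [PP_def, PP_def, PP_def, ← Finset.prod_mul_distrib]
    refine Finset.prod_congr rfl fun j _ => ?_
    rw [hu]
    have h2 : k + (j : ℤ) + 1 + 1 = k + 1 + j + 1 := by ring
    rw [h2]
  -- the U-system in u-form
  have hB : ∀ k : ℤ, u k * PP u m k = γ k * PP w m k + α := by
    intro k
    have h := hUsys k
    rw [Finset.prod_pow, ← PP_def] at h
    have hkN : k + (N : ℤ) = k + (m : ℤ) + 1 := by omega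
    rw [hkN] at h
    rw [hu k, hQ k]
    have hs := PP_shift w m k
    linear_combination h + (w k * PP w m k) * hs
  -- key equations
  have E1 := hB n
  have E2 : u (n + 1 + (m : ℤ) + 1) * PP u m (n + 1) =
      γ n * PP w m (n + 2) + α := by
    have h := hB (n + 2)
    rw [hper n] at h
    have hs := PP_shift u m (n + 1)
    have h12 : (n : ℤ) + 1 + 1 = n + 2 := by ring
    rw [h12] at hs
    rw [mul_comm (PP u m (n + 1)) (u (n + 1 + (m : ℤ) + 1))] at hs
    rw [hs] at h
    exact h
  -- rewrite goal in PP form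
  have hg1 : (∏ j ∈ Finset.range m, u (n + j + 1)) = PP u m n := rfl
  have hg2 : (∏ j ∈ Finset.range m, u (n + j + 2)) = PP u m (n + 1) := by
    rw [PP_def]
    refine Finset.prod_congr rfl fun j _ => ?_
    congr 1; ring
  have harg : n + (N : ℤ) + 1 = n + 1 + (m : ℤ) + 1 := by omega
  rw [harg, hg1, hg2]
  have hA := PP_ne_zero w hw m n
  have hBne := PP_ne_zero w hw m (n + 1)
  have hC := PP_ne_zero w hw m (n + 2)
  rw [hQ n] at E1 ⊢
  rw [hQ (n + 1)] at E2 ⊢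
  rw [show (n : ℤ) + 1 + 1 = n + 2 from by ring] at E2 ⊢
  field_simp
  linear_combination PP w m n * E2 -
    PP w m (n + 2) * E1
end

section
/- Let K be a field, N ≥ 3 an ODD integer, and α ∈ K. Suppose u : ℤ → K with u_n ≠ 0 for all n, and γ : ℤ → K with γ_{n+2} = γ_n for all n, satisfy the U-system ∏_{j=0}^{N−1} u_{n+j} = γ_n·∏_{k=0}^{(N−3)/2} u_{n+2k+1} + α for all n ∈ ℤ. Then u satisfies the lifted DTKQ equation of order N+1 with parameter α for all n ∈ ℤ. (This expresses the commutativity φ ∘ π̂₁ = π̂₁ ∘ ψ of the diagram of Theorem: the birational map π̂₁ sends orbits of the U-system map ψ to orbits of the lifted DTKQ map φ.) -/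
/-- for odd `N`, if `u` and 2-periodic `γ` satisfy the U-system
`∏_{j=0}^{N-1} u_{n+j} = γ_n ∏_{k=0}^{(N-3)/2} u_{n+2k+1} + α`, then `u` satisfies the
lifted DTKQ equation of order `N+1`. -/
theorem usystem_odd_to_lifted_dtkq {K : Type*} [Field K] (N : ℕ) (hN : 3 ≤ N)
    (hNodd : Odd N) (α : K)
    (u : ℤ → K) (hu : ∀ n, u n ≠ 0)
    (γ : ℤ → K) (hper : ∀ n : ℤ, γ (n + 2) = γ n)
    (hUsys : ∀ n : ℤ,
      ∏ j ∈ Finset.range N, u (n + j) =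
        γ n * ∏ k ∈ Finset.range ((N - 1) / 2), u (n + 2 * k + 1) + α) :
    ∀ n : ℤ,
      u (n + N + 1) - u n +
        α * (1 / ∏ j ∈ Finset.range (N - 1), u (n + j + 1) -
          1 / ∏ j ∈ Finset.range (N - 1), u (n + j + 2)) = 0 := by
  obtain ⟨m, hm⟩ := hNodd
  subst hm
  have hm1 : 1 ≤ m := by omega
  intro n
  have hdiv : (2 * m + 1 - 1) / 2 = m := by omega
  have hsub : 2 * m + 1 - 1 = 2 * m := by omega
  rw [hsub]
  set A : K := ∏ j ∈ Finset.range (2 * m), u (n + j + 1) with hA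
  set B : K := ∏ j ∈ Finset.range (2 * m), u (n + j + 2) with hB
  have hAne : A ≠ 0 := Finset.prod_ne_zero_iff.mpr fun _ _ => hu _
  have hBne : B ≠ 0 := Finset.prod_ne_zero_iff.mpr fun _ _ => hu _
  -- products
  have hPn : ∏ j ∈ Finset.range (2 * m + 1), u (n + j) = u n * A := by
    rw [Finset.prod_range_succ']
    have h0 : u (n + ((0:ℕ):ℤ)) = u n := by norm_num
    rw [h0, mul_comm]
    congr 1
    exact Finset.prod_congr rfl fun j _ => by congr 1; push_cast; ring
  have hPn1A : ∏ j ∈ Finset.range (2 * m + 1), u ((n+1) + j) = A * u (n + (2*m+1)) := by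
    rw [Finset.prod_range_succ]
    congr 1
    · exact Finset.prod_congr rfl fun j _ => by congr 1; push_cast; ring
    · congr 1; push_cast; ring
  have hPn1B : ∏ j ∈ Finset.range (2 * m + 1), u ((n+1) + j) = u (n+1) * B := by
    rw [Finset.prod_range_succ']
    have h0 : u (n + 1 + ((0:ℕ):ℤ)) = u (n+1) := by norm_num
    rw [h0, mul_comm]
    congr 1
    exact Finset.prod_congr rfl fun j _ => by congr 1; push_cast; ring
  have hPn2 : ∏ j ∈ Finset.range (2 * m + 1), u ((n+2) + j) = B * u (n + (2*m+2)) := by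
    rw [Finset.prod_range_succ]
    congr 1
    · exact Finset.prod_congr rfl fun j _ => by congr 1; push_cast; ring
    · congr 1; push_cast; ring
  set Qn : K := ∏ k ∈ Finset.range m, u (n + 2 * k + 1) with hQn
  set Q2 : K := ∏ k ∈ Finset.range m, u ((n+2) + 2 * k + 1) with hQ2'
  have hQnne : Qn ≠ 0 := Finset.prod_ne_zero_iff.mpr fun _ _ => hu _
  -- odd-product shift identity
  have h1' : ∏ k ∈ Finset.range (m+1), u (n + 2 * k + 1) = Q2 * u (n+1) := by
    rw [Finset.prod_range_succ']
    have h0 : u (n + 2 * ((0:ℕ):ℤ) + 1) = u (n+1) := by norm_num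
    rw [h0]
    congr 1
    exact Finset.prod_congr rfl fun k _ => by congr 1; push_cast; ring
  have h2' : ∏ k ∈ Finset.range (m+1), u (n + 2 * k + 1) = Qn * u (n + (2*m+1)) := by
    rw [Finset.prod_range_succ]
    congr 1
    push_cast; ring
  have hQ : Q2 * u (n+1) = Qn * u (n + (2*m+1)) := by rw [← h1']; exact h2'
  -- U-system instances
  have h1 : u n * A = γ n * Qn + α := by
    have := hUsys n; rw [hdiv] at this; rw [← hPn]; exact this
  have h2 : B * u (n + (2*m+2)) = γ n * Q2 + α := by
    have := hUsys (n+2); rw [hdiv, hper] at this; rw [← hPn2]; exact this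
  -- eliminate γ
  have e1 : u n * A - α = γ n * Qn := by rw [h1]; ring
  have e2 : B * u (n + (2*m+2)) - α = γ n * Q2 := by rw [h2]; ring
  have key0 : (u n * A - α) * (Q2 * u (n+1)) = (B * u (n + (2*m+2)) - α) * (Qn * u (n+1)) := by
    rw [e1, e2]; ring
  rw [hQ] at key0
  have key : (u n * A - α) * u (n + (2*m+1)) = (B * u (n + (2*m+2)) - α) * u (n+1) :=
    mul_left_cancel₀ hQnne (by linear_combination key0)
  have hP : A * u (n + (2*m+1)) = u (n+1) * B := by rw [← hPn1A, hPn1B]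
  -- conclude
  have hcast : (n : ℤ) + (2*m+1 : ℕ) + 1 = n + (2*m+2) := by push_cast; ring
  rw [hcast]
  have hA' : (1/A) * (A * B * u (n+1)) = B * u (n+1) := by field_simp
  have hB' : (1/B) * (A * B * u (n+1)) = A * u (n+1) := by field_simp
  have hmain : (u (n + (2*m+2)) - u n + α * (1/A - 1/B)) * (A * B * u (n+1)) = 0 := by
    linear_combination α * hA' - α * hB' - A * key + (u n * A - α) * hP
  have hne : A * B * u (n+1) ≠ 0 := mul_ne_zero (mul_ne_zero hAne hBne) (hu _)
  have := mul_eq_zero.mp hmain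
  tauto
end
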